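/- arXiv:1512.00834 — 9 statements merged into one kernel-verified Lean document; each statement's English description precedes it below -/
import Mathlib

section
/- Let D_r(t) = Σ_{i=0}^{r} B_i(t) C_{r-i}(t), where B_i(t) = Pr[Bin(k_p t, p) = i] and C_j(t) = Pr[Bin(k_q t, q) = j]. If k_p t > r and k_q t > r, 0 < p < 1, 0 < q < 1, and φ = k_p p + k_q q, then D_{r+1}(t) ≤ (φ t / (1 - max(p,q))) * D_r(t). -/
open Finset

private lemma binom_step_aux (n k : ℕ) (p : ℝ) (hp0 : 0 < p) (hp1 : p < 1) :
    (n.choose (k+1) : ℝ) * p ^ (k+1) * (1 - p) ^ (n - (k+1)) ≤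
    ((n : ℝ) * p / (1 - p)) * ((n.choose k : ℝ) * p ^ k * (1 - p) ^ (n - k)) := by
  have h1p : (0:ℝ) < 1 - p := by linarith
  rcases le_or_gt n k with h | h
  · have h0 : n.choose (k+1) = 0 := Nat.choose_eq_zero_of_lt (by omega)
    rw [h0]
    push_cast
    rw [zero_mul, zero_mul]
    positivity
  · have hsub : n - k = (n - (k+1)) + 1 := by omega
    have hch : (n.choose (k+1) : ℝ) ≤ (n : ℝ) * n.choose k := by
      have h2 : n.choose (k+1) * (k+1) = n.choose k * (n - k) := Nat.choose_succ_right_eq n k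
      have h3 : n.choose (k+1) ≤ n.choose (k+1) * (k+1) := Nat.le_mul_of_pos_right _ (by omega)
      have h4 : n.choose k * (n - k) ≤ n.choose k * n := Nat.mul_le_mul_left _ (by omega)
      exact_mod_cast h3.trans ((h2 ▸ h4).trans_eq (Nat.mul_comm _ _))
    have hrhs : ((n : ℝ) * p / (1 - p)) * ((n.choose k : ℝ) * p ^ k * (1 - p) ^ (n - k))
        = ((n : ℝ) * n.choose k) * p ^ (k+1) * (1 - p) ^ (n - (k+1)) := by
      rw [hsub, pow_succ, pow_succ]
      field_simp
    rw [hrhs]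
    have hnn : (0:ℝ) ≤ p ^ (k+1) * (1 - p) ^ (n - (k+1)) := by positivity
    calc (n.choose (k+1) : ℝ) * p ^ (k+1) * (1 - p) ^ (n - (k+1))
        = (n.choose (k+1) : ℝ) * (p ^ (k+1) * (1 - p) ^ (n - (k+1))) := by ring
      _ ≤ ((n : ℝ) * n.choose k) * (p ^ (k+1) * (1 - p) ^ (n - (k+1))) :=
          mul_le_mul_of_nonneg_right hch hnn
      _ = ((n : ℝ) * n.choose k) * p ^ (k+1) * (1 - p) ^ (n - (k+1)) := by ring

theorem binom_sum_pmf_succ_le (kp kq t r : ℕ) (p q : ℝ)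
    (hkp : r < kp * t) (hkq : r < kq * t)
    (hp0 : 0 < p) (hp1 : p < 1) (hq0 : 0 < q) (hq1 : q < 1)
    (φ : ℝ) (hφ : φ = kp * p + kq * q)
    (D : ℕ → ℝ)
    (hD : ∀ s, D s = ∑ i ∈ Finset.range (s + 1),
      ((kp * t).choose i : ℝ) * p ^ i * (1 - p) ^ (kp * t - i) *
      ((kq * t).choose (s - i) : ℝ) * q ^ (s - i) * (1 - q) ^ (kq * t - (s - i))) :
    D (r + 1) ≤ (φ * t / (1 - max p q)) * D r := by
  have hM : max p q < 1 := max_lt hp1 hq1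
  have h1M : (0:ℝ) < 1 - max p q := by linarith
  have h1p : (0:ℝ) < 1 - p := by linarith
  have h1q : (0:ℝ) < 1 - q := by linarith
  set n := kp * t with hn
  set m := kq * t with hm
  set f : ℕ → ℝ := fun i => (n.choose i : ℝ) * p ^ i * (1 - p) ^ (n - i) with hfdef
  set g : ℕ → ℝ := fun j => (m.choose j : ℝ) * q ^ j * (1 - q) ^ (m - j) with hgdef
  have hf : ∀ i, 0 ≤ f i := fun i => by
    simp only [hfdef]; positivity
  have hg : ∀ j, 0 ≤ g j := fun j => by
    simp only [hgdef]; positivity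
  have hDs : ∀ s, D s = ∑ i ∈ range (s + 1), f i * g (s - i) := by
    intro s
    rw [hD s]
    refine Finset.sum_congr rfl fun i _ => ?_
    simp only [hfdef, hgdef]
    ring
  have hDr_nonneg : 0 ≤ D r := by
    rw [hDs r]
    exact Finset.sum_nonneg fun i _ => mul_nonneg (hf i) (hg _)
  have hsingle : f 0 * g r ≤ D r := by
    rw [hDs r]
    have := Finset.single_le_sum (f := fun i => f i * g (r - i))
      (fun i _ => mul_nonneg (hf i) (hg _)) (Finset.mem_range.mpr (Nat.succ_pos r))
    simpa using this
  -- split D (r+1)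
  have hsplit : D (r + 1) =
      (∑ i ∈ range (r + 1), f (i + 1) * g (r - i)) + f 0 * g (r + 1) := by
    rw [hDs (r + 1), Finset.sum_range_succ' (fun i => f i * g (r + 1 - i)) (r + 1)]
    simp [Nat.succ_sub_succ]
  have cp : (0:ℝ) ≤ (n : ℝ) * p / (1 - p) := by positivity
  have cq : (0:ℝ) ≤ (m : ℝ) * q / (1 - q) := by positivity
  have hterm1 : (∑ i ∈ range (r + 1), f (i + 1) * g (r - i)) ≤
      ((n : ℝ) * p / (1 - p)) * D r := by
    rw [hDs r, Finset.mul_sum]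
    refine Finset.sum_le_sum fun i _ => ?_
    have hstep : f (i + 1) ≤ ((n : ℝ) * p / (1 - p)) * f i :=
      binom_step_aux n i p hp0 hp1
    calc f (i + 1) * g (r - i) ≤ (((n : ℝ) * p / (1 - p)) * f i) * g (r - i) :=
          mul_le_mul_of_nonneg_right hstep (hg _)
      _ = ((n : ℝ) * p / (1 - p)) * (f i * g (r - i)) := by ring
  have hterm2 : f 0 * g (r + 1) ≤ ((m : ℝ) * q / (1 - q)) * D r := by
    have hstep : g (r + 1) ≤ ((m : ℝ) * q / (1 - q)) * g r :=
      binom_step_aux m r q hq0 hq1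
    calc f 0 * g (r + 1) ≤ f 0 * (((m : ℝ) * q / (1 - q)) * g r) :=
          mul_le_mul_of_nonneg_left hstep (hf 0)
      _ = ((m : ℝ) * q / (1 - q)) * (f 0 * g r) := by ring
      _ ≤ ((m : ℝ) * q / (1 - q)) * D r := mul_le_mul_of_nonneg_left hsingle cq
  have hbound : D (r + 1) ≤ ((n : ℝ) * p / (1 - p) + (m : ℝ) * q / (1 - q)) * D r := by
    rw [hsplit, add_mul]
    exact add_le_add hterm1 hterm2
  refine hbound.trans ?_
  apply mul_le_mul_of_nonneg_right _ hDr_nonneg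
  have h1 : (n : ℝ) * p / (1 - p) ≤ (n : ℝ) * p / (1 - max p q) := by
    apply div_le_div_of_nonneg_left (by positivity) h1M
    have : p ≤ max p q := le_max_left p q
    linarith
  have h2 : (m : ℝ) * q / (1 - q) ≤ (m : ℝ) * q / (1 - max p q) := by
    apply div_le_div_of_nonneg_left (by positivity) h1M
    have : q ≤ max p q := le_max_right p q
    linarith
  have heq : φ * t / (1 - max p q) = ((n : ℝ) * p + (m : ℝ) * q) / (1 - max p q) := by
    rw [hφ, hn, hm]
    push_cast
    ring_nf
  rw [heq, add_div]
  exact add_le_add h1 h2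
end

section
/- Suppose φ t (1 - max(p,q))^{-1} < 2/3, where φ = k_p p + k_q q. Then D_{a+1}(t) < (2/3) D_a(t), where D_r(t) is the probability that the sum of independent binomials Bin(k_p t, p) and Bin(k_q t, q) equals r, for all a with k_p t > a and k_q t > a. -/
open Finset

lemma choose_succ_le_real (n k : ℕ) : (n.choose (k+1) : ℝ) ≤ n * n.choose k := by
  have h : n.choose (k+1) ≤ n * n.choose k := by
    calc n.choose (k+1) ≤ n.choose (k+1) * (k+1) := Nat.le_mul_of_pos_right _ (Nat.succ_pos k)
    _ = n.choose k * (n - k) := Nat.choose_succ_right_eq n k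
    _ ≤ n.choose k * n := Nat.mul_le_mul_left _ (Nat.sub_le n k)
    _ = n * n.choose k := Nat.mul_comm _ _
  exact_mod_cast h

lemma term_step (n k : ℕ) (x : ℝ) (hx0 : 0 < x) (hx1 : x < 1) :
    (n.choose (k+1) : ℝ) * x^(k+1) * (1-x)^(n-(k+1)) ≤
      (n*x/(1-x)) * ((n.choose k : ℝ) * x^k * (1-x)^(n-k)) := by
  have h1x : 0 < 1 - x := by linarith
  by_cases h : k+1 ≤ n
  · have hnk : n - k = (n - (k+1)) + 1 := by omega
    rw [hnk, pow_succ, pow_succ]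
    rw [div_mul_eq_mul_div, le_div_iff₀ h1x]
    have hc := choose_succ_le_real n k
    have hpk : (0:ℝ) ≤ x^k := le_of_lt (pow_pos hx0 k)
    have hpnk : (0:ℝ) ≤ (1-x)^(n-(k+1)) := le_of_lt (pow_pos h1x _)
    nlinarith [mul_le_mul_of_nonneg_right hc
      (mul_nonneg (mul_nonneg hpk hx0.le) (mul_nonneg hpnk h1x.le))]
  · have h0 : n.choose (k+1) = 0 := Nat.choose_eq_zero_of_lt (by omega)
    rw [h0]
    push_cast
    rw [zero_mul, zero_mul]
    positivity

theorem binom_sum_pmf_succ_lt (kp kq t a : ℕ) (p q : ℝ)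
    (hka : a < kp * t) (hkb : a < kq * t)
    (hp0 : 0 < p) (hp1 : p < 1) (hq0 : 0 < q) (hq1 : q < 1)
    (φ : ℝ) (hφ : φ = kp * p + kq * q)
    (hsmall : φ * t * (1 - max p q)⁻¹ < 2 / 3)
    (D : ℕ → ℝ)
    (hD : ∀ s, D s = ∑ i ∈ Finset.range (s + 1),
      ((kp * t).choose i : ℝ) * p ^ i * (1 - p) ^ (kp * t - i) *
      ((kq * t).choose (s - i) : ℝ) * q ^ (s - i) * (1 - q) ^ (kq * t - (s - i))) :
    D (a + 1) < (2 / 3) * D a := by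
  set n := kp * t with hn
  set m := kq * t with hm
  have h1p : (0:ℝ) < 1 - p := by linarith
  have h1q : (0:ℝ) < 1 - q := by linarith
  set c1 : ℝ := (m:ℝ) * q / (1 - q) with hc1
  set c2 : ℝ := (n:ℝ) * p / (1 - p) with hc2
  have hc1nn : 0 ≤ c1 := by positivity
  have hc2nn : 0 ≤ c2 := by positivity
  set f : ℕ → ℕ → ℝ := fun s i =>
      ((n).choose i : ℝ) * p ^ i * (1 - p) ^ (n - i) *
      ((m).choose (s - i) : ℝ) * q ^ (s - i) * (1 - q) ^ (m - (s - i)) with hf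
  have hterm_nn : ∀ s i, 0 ≤ f s i := by
    intro s i; simp only [hf]; positivity
  have hDa_pos : 0 < D a := by
    rw [hD]
    apply Finset.sum_pos' (fun i _ => hterm_nn a i)
    refine ⟨0, Finset.mem_range.2 (Nat.succ_pos a), ?_⟩
    simp only [hf]
    have hch : 0 < ((m).choose a : ℝ) := by exact_mod_cast Nat.choose_pos (le_of_lt hkb)
    simp only [Nat.choose_zero_right, pow_zero, Nat.sub_zero, Nat.cast_one]
    positivity
  -- key bound
  have key : D (a+1) ≤ (c1 + c2) * D a := by
    rw [hD, hD]
    rw [Finset.sum_range_succ' (fun i => f (a+1) i) (a+1)]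
    have h2 : ∀ j ∈ Finset.range (a+1), f (a+1) (j+1) ≤ c2 * f a j := by
      intro j hj
      simp only [hf]
      have hsub : (a+1) - (j+1) = a - j := by omega
      rw [hsub]
      have hK : (0:ℝ) ≤ ((m).choose (a-j) : ℝ) * q ^ (a-j) * (1-q)^(m-(a-j)) := by positivity
      have := mul_le_mul_of_nonneg_right (term_step n j p hp0 hp1) hK
      calc ((n).choose (j+1) : ℝ) * p ^ (j+1) * (1 - p) ^ (n - (j+1)) *
            ((m).choose (a-j) : ℝ) * q ^ (a-j) * (1 - q) ^ (m - (a-j))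
          = (((n).choose (j+1) : ℝ) * p ^ (j+1) * (1 - p) ^ (n - (j+1))) *
            (((m).choose (a-j) : ℝ) * q ^ (a-j) * (1 - q) ^ (m - (a-j))) := by ring
        _ ≤ ((n:ℝ)*p/(1-p)) * (((n).choose j : ℝ) * p ^ j * (1-p)^(n-j)) *
            (((m).choose (a-j) : ℝ) * q ^ (a-j) * (1 - q) ^ (m - (a-j))) := this
        _ = c2 * (((n).choose j : ℝ) * p ^ j * (1 - p) ^ (n - j) *
            ((m).choose (a-j) : ℝ) * q ^ (a-j) * (1 - q) ^ (m - (a-j))) := by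
            rw [hc2]; ring
    have h0 : f (a+1) 0 ≤ c1 * f a 0 := by
      simp only [hf, Nat.sub_zero]
      have hK : (0:ℝ) ≤ ((n).choose 0 : ℝ) * p ^ 0 * (1-p)^(n-0) := by positivity
      have hstep := term_step m a q hq0 hq1
      calc ((n).choose 0 : ℝ) * p ^ 0 * (1 - p) ^ (n - 0) *
            ((m).choose (a+1) : ℝ) * q ^ (a+1) * (1 - q) ^ (m - (a+1))
          = (((n).choose 0 : ℝ) * p ^ 0 * (1 - p) ^ (n - 0)) *
            (((m).choose (a+1) : ℝ) * q ^ (a+1) * (1 - q) ^ (m - (a+1))) := by ring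
        _ ≤ (((n).choose 0 : ℝ) * p ^ 0 * (1 - p) ^ (n - 0)) *
            (((m:ℝ)*q/(1-q)) * (((m).choose a : ℝ) * q ^ a * (1-q)^(m-a))) :=
            mul_le_mul_of_nonneg_left hstep hK
        _ = c1 * (((n).choose 0 : ℝ) * p ^ 0 * (1 - p) ^ (n - 0) *
            ((m).choose a : ℝ) * q ^ a * (1 - q) ^ (m - a)) := by rw [hc1]; ring
    have hsum2 : (∑ j ∈ Finset.range (a+1), f (a+1) (j+1)) ≤ c2 * ∑ j ∈ Finset.range (a+1), f a j := by
      rw [Finset.mul_sum]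
      exact Finset.sum_le_sum h2
    have hf0le : f a 0 ≤ ∑ j ∈ Finset.range (a+1), f a j :=
      Finset.single_le_sum (fun i _ => hterm_nn a i) (Finset.mem_range.2 (Nat.succ_pos a))
    have : f (a+1) 0 ≤ c1 * ∑ j ∈ Finset.range (a+1), f a j :=
      h0.trans (mul_le_mul_of_nonneg_left hf0le hc1nn)
    calc (∑ j ∈ Finset.range (a+1), f (a+1) (j+1)) + f (a+1) 0
        ≤ c2 * (∑ j ∈ Finset.range (a+1), f a j) + c1 * (∑ j ∈ Finset.range (a+1), f a j) :=
          add_le_add hsum2 this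
      _ = (c1 + c2) * ∑ j ∈ Finset.range (a+1), f a j := by ring
  -- c1 + c2 < 2/3
  have hmaxlt : max p q < 1 := max_lt hp1 hq1
  have h1max : (0:ℝ) < 1 - max p q := by linarith
  have hle1 : c1 ≤ (m:ℝ) * q * (1 - max p q)⁻¹ := by
    rw [hc1, div_eq_mul_inv]
    apply mul_le_mul_of_nonneg_left _ (by positivity)
    apply inv_anti₀ h1max
    have : q ≤ max p q := le_max_right p q
    linarith
  have hle2 : c2 ≤ (n:ℝ) * p * (1 - max p q)⁻¹ := by
    rw [hc2, div_eq_mul_inv]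
    apply mul_le_mul_of_nonneg_left _ (by positivity)
    apply inv_anti₀ h1max
    have : p ≤ max p q := le_max_left p q
    linarith
  have hφt : φ * t = (n:ℝ) * p + (m:ℝ) * q := by
    rw [hφ, hn, hm]; push_cast; ring
  have hcsum : c1 + c2 < 2/3 := by
    have : c1 + c2 ≤ ((n:ℝ)*p + (m:ℝ)*q) * (1 - max p q)⁻¹ := by
      calc c1 + c2 ≤ (m:ℝ)*q*(1-max p q)⁻¹ + (n:ℝ)*p*(1-max p q)⁻¹ := add_le_add hle1 hle2
        _ = ((n:ℝ)*p + (m:ℝ)*q) * (1 - max p q)⁻¹ := by ring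
    rw [← hφt] at this
    linarith
  calc D (a+1) ≤ (c1 + c2) * D a := key
    _ < (2/3) * D a := by
      exact mul_lt_mul_of_pos_right hcsum hDa_pos
end

section
/- Let r' ≥ 1 be a natural number, p ≥ q probabilities in (0, 1/2], x ≥ 1 and t natural numbers with xt an integer and φ = k_p p + k_q q satisfying φ x t ≤ 1/3. Then Pr[Bin(k_p t x, p) + Bin(k_q t x, q) = r'] ≤ (φ x t / (1-p))^{r'} / r'! * (1-p)^{x t k_p} (1-q)^{x t k_q}. -/
open Finset

lemma binom_term_le' (n i : ℕ) (p : ℝ) (hp0 : 0 < p) (hp1 : p < 1) :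
    (n.choose i : ℝ) * p ^ i * (1 - p) ^ (n - i) ≤
      (1 - p) ^ n * (((n : ℝ) * p / (1 - p)) ^ i / i.factorial) := by
  have h1p : (0:ℝ) < 1 - p := by linarith
  rcases le_or_gt i n with h | h
  · have hc : (n.choose i : ℝ) ≤ (n:ℝ) ^ i / i.factorial := Nat.choose_le_pow_div i n
    have hpow : (1 - p) ^ (n - i) = (1 - p) ^ n / (1 - p) ^ i :=
      pow_sub₀ _ (ne_of_gt h1p) h
    rw [hpow]
    calc (n.choose i : ℝ) * p ^ i * ((1 - p) ^ n / (1 - p) ^ i)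
        ≤ ((n:ℝ) ^ i / i.factorial) * p ^ i * ((1 - p) ^ n / (1 - p) ^ i) := by
          gcongr
      _ = (1 - p) ^ n * (((n : ℝ) * p / (1 - p)) ^ i / i.factorial) := by
          rw [div_pow, mul_pow]; ring
  · have : n.choose i = 0 := Nat.choose_eq_zero_of_lt h
    rw [this]
    simp only [Nat.cast_zero, zero_mul]
    positivity

lemma sum_div_factorial' (r : ℕ) (a b : ℝ) :
    ∑ i ∈ Finset.range (r+1), a ^ i / i.factorial * (b ^ (r-i) / (r-i).factorial)
      = (a + b) ^ r / r.factorial := by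
  rw [add_pow, Finset.sum_div]
  apply Finset.sum_congr rfl
  intro i hi
  have hi' : i ≤ r := Nat.lt_succ_iff.mp (Finset.mem_range.mp hi)
  have h : (r.choose i : ℝ) * i.factorial * (r-i).factorial = r.factorial := by
    exact_mod_cast congrArg Nat.cast (Nat.choose_mul_factorial_mul_factorial hi')
  have hif : (i.factorial : ℝ) ≠ 0 := Nat.cast_ne_zero.mpr i.factorial_ne_zero
  have hrif : ((r-i).factorial : ℝ) ≠ 0 := Nat.cast_ne_zero.mpr (r-i).factorial_ne_zero
  have hrf : (r.factorial : ℝ) ≠ 0 := Nat.cast_ne_zero.mpr r.factorial_ne_zero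
  field_simp
  linear_combination (-(a ^ i * b ^ (r - i))) * h

theorem binom_sum_pmf_upper (kp kq x t r' : ℕ) (p q : ℝ)
    (hkp : 1 ≤ kp) (hkq : 1 ≤ kq) (hx : 1 ≤ x) (hr' : 1 ≤ r')
    (hq0 : 0 < q) (hqp : q ≤ p) (hp : p ≤ 1/2)
    (φ : ℝ) (hφ : φ = kp * p + kq * q)
    (hsmall : φ * x * t ≤ 1/3) :
    (∑ i ∈ Finset.range (r' + 1),
        ((kp * x * t).choose i : ℝ) * p ^ i * (1 - p) ^ (kp * x * t - i) *
        ((kq * x * t).choose (r' - i) : ℝ) * q ^ (r' - i) * (1 - q) ^ (kq * x * t - (r' - i)))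
      ≤ (φ * x * t / (1 - p)) ^ r' / (r'.factorial : ℝ) *
          (1 - p) ^ (x * t * kp) * (1 - q) ^ (x * t * kq) := by
  have hp0 : 0 < p := lt_of_lt_of_le hq0 hqp
  have h1p : (0:ℝ) < 1 - p := by linarith
  have h1q : (0:ℝ) < 1 - q := by linarith
  set n := kp * x * t with hn
  set m := kq * x * t with hm
  set a := (n:ℝ) * p / (1 - p) with ha
  set b := (m:ℝ) * q / (1 - p) with hb
  have step1 : (∑ i ∈ Finset.range (r' + 1),
        (n.choose i : ℝ) * p ^ i * (1 - p) ^ (n - i) *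
        (m.choose (r' - i) : ℝ) * q ^ (r' - i) * (1 - q) ^ (m - (r' - i))) ≤
      ∑ i ∈ Finset.range (r'+1),
        ((1-p)^n * (a^i / i.factorial)) * ((1-q)^m * (b^(r'-i)/(r'-i).factorial)) := by
    apply Finset.sum_le_sum
    intro i _
    have t1 := binom_term_le' n i p hp0 (by linarith)
    have t2 : (m.choose (r'-i) : ℝ) * q ^ (r'-i) * (1-q)^(m-(r'-i)) ≤
        (1-q)^m * (b^(r'-i)/(r'-i).factorial) := by
      calc (m.choose (r'-i) : ℝ) * q ^ (r'-i) * (1-q)^(m-(r'-i))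
          ≤ (1-q)^m * (((m:ℝ)*q/(1-q))^(r'-i)/(r'-i).factorial) :=
            binom_term_le' m (r'-i) q hq0 (by linarith)
        _ ≤ (1-q)^m * (b^(r'-i)/(r'-i).factorial) := by
            have hcb : (m:ℝ)*q/(1-q) ≤ b := by
              rw [hb]; gcongr
            have hc0 : (0:ℝ) ≤ (m:ℝ)*q/(1-q) := by positivity
            gcongr
    calc (n.choose i : ℝ) * p ^ i * (1 - p) ^ (n - i) *
        (m.choose (r' - i) : ℝ) * q ^ (r' - i) * (1 - q) ^ (m - (r' - i))
        = ((n.choose i:ℝ)*p^i*(1-p)^(n-i)) * ((m.choose (r'-i):ℝ)*q^(r'-i)*(1-q)^(m-(r'-i))) := by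
          ring
      _ ≤ ((1-p)^n * (a^i / i.factorial)) * ((1-q)^m * (b^(r'-i)/(r'-i).factorial)) := by
          apply mul_le_mul t1 t2 (by positivity) (by positivity)
  have step2 : (∑ i ∈ Finset.range (r'+1),
        ((1-p)^n * (a^i / i.factorial)) * ((1-q)^m * (b^(r'-i)/(r'-i).factorial)))
      = (1-p)^n * (1-q)^m * ((a+b)^r' / r'.factorial) := by
    rw [← sum_div_factorial' r' a b, Finset.mul_sum]
    apply Finset.sum_congr rfl
    intro i _
    ring
  have hab : a + b = φ * x * t / (1 - p) := by
    rw [ha, hb, ← add_div, hφ, hn, hm]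
    push_cast
    ring
  have e1 : x * t * kp = n := by rw [hn]; ring
  have e2 : x * t * kq = m := by rw [hm]; ring
  rw [e1, e2]
  calc _ ≤ _ := step1
    _ = (1-p)^n * (1-q)^m * ((a+b)^r' / r'.factorial) := step2
    _ = (φ * x * t / (1 - p)) ^ r' / (r'.factorial : ℝ) * (1-p)^n * (1-q)^m := by
        rw [hab]; ring
end

section
/- Let r ≥ 1, and suppose xt ≥ 4r where x, t, k_p, k_q are positive naturals, p, q ∈ (0, 1/2]. Then Pr[Bin(k_p t x, p) + Bin(k_q t x, q) = r] ≥ (φ x t)^r / ((4/3)^r r!) * (1-p)^{x t k_p} (1-q)^{x t k_q}, where φ = k_p p + k_q q. -/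
open Finset

lemma choose_lower (y i : ℕ) (h : 4 * i ≤ y) :
    (3 * (y:ℝ) / 4) ^ i / (i.factorial : ℝ) ≤ (y.choose i : ℝ) := by
  rw [div_le_iff₀ (by positivity)]
  have h1 : (y.choose i : ℝ) * (i.factorial : ℝ) = (y.descFactorial i : ℝ) := by
    rw [← Nat.cast_mul]
    congr 1
    rw [Nat.descFactorial_eq_factorial_mul_choose, Nat.mul_comm]
  rw [h1, Nat.descFactorial_eq_prod_range, Nat.cast_prod]
  calc (3 * (y:ℝ) / 4) ^ i = ∏ _j ∈ range i, (3 * (y:ℝ) / 4) := by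
        rw [prod_const, card_range]
    _ ≤ ∏ j ∈ range i, ((y - j : ℕ) : ℝ) := by
        apply prod_le_prod (fun j _ => by positivity)
        intro j hj
        rw [mem_range] at hj
        have hjy : j ≤ y := by omega
        rw [Nat.cast_sub hjy]
        have : (4 * (j+1) : ℝ) ≤ (y : ℝ) := by
          exact_mod_cast Nat.le_trans (by omega) h
        linarith

lemma term_lb (N M i j : ℕ) (p q : ℝ)
    (hq0 : 0 < q) (hqp : q ≤ p) (hp : p ≤ 1/2)
    (hN : 4 * (i + j) ≤ N) (hM : 4 * (i + j) ≤ M) :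
    ((N:ℝ) * p) ^ i * ((M:ℝ) * q) ^ j * ((i+j).choose i : ℝ) /
      ((4/3 : ℝ) ^ (i+j) * ((i+j).factorial : ℝ)) * (1 - p) ^ N * (1 - q) ^ M
    ≤ (N.choose i : ℝ) * p ^ i * (1 - p) ^ (N - i) *
      (M.choose j : ℝ) * q ^ j * (1 - q) ^ (M - j) := by
  have hp0 : 0 < p := lt_of_lt_of_le hq0 hqp
  have hq1 : q ≤ 1/2 := le_trans hqp hp
  have hc : (((i+j).choose i : ℝ)) * (i.factorial : ℝ) * (j.factorial : ℝ)
      = ((i+j).factorial : ℝ) := by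
    have := Nat.choose_mul_factorial_mul_factorial (Nat.le_add_right i j)
    rw [Nat.add_sub_cancel_left] at this
    exact_mod_cast this
  have e1 := choose_lower N i (by omega)
  have e2 := choose_lower M j (by omega)
  have e3 : (1 - p) ^ N ≤ (1 - p) ^ (N - i) :=
    pow_le_pow_of_le_one (by linarith) (by linarith) (Nat.sub_le N i)
  have e4 : (1 - q) ^ M ≤ (1 - q) ^ (M - j) :=
    pow_le_pow_of_le_one (by linarith) (by linarith) (Nat.sub_le M j)
  calc ((N:ℝ) * p) ^ i * ((M:ℝ) * q) ^ j * ((i+j).choose i : ℝ) /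
      ((4/3 : ℝ) ^ (i+j) * ((i+j).factorial : ℝ)) * (1 - p) ^ N * (1 - q) ^ M
      = ((3 * (N:ℝ) / 4) ^ i / (i.factorial : ℝ)) * p ^ i * (1 - p) ^ N *
        (((3 * (M:ℝ) / 4) ^ j / (j.factorial : ℝ)) * q ^ j * (1 - q) ^ M) := by
        have hif : (i.factorial : ℝ) ≠ 0 := by positivity
        have hjf : (j.factorial : ℝ) ≠ 0 := by positivity
        have hijf : ((i+j).factorial : ℝ) ≠ 0 := by positivity
        field_simp
        rw [← hc]
        have hX : ((3:ℝ) / 4) ^ i * (4 / 3) ^ i = 1 := by rw [← mul_pow]; norm_num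
        have hY : ((3:ℝ) / 4) ^ j * (4 / 3) ^ j = 1 := by rw [← mul_pow]; norm_num
        linear_combination (-((N:ℝ) ^ i * p ^ i * (M:ℝ) ^ j * q ^ j * ((i + j).choose i : ℝ) * (i.factorial : ℝ) * (j.factorial : ℝ) * (1 - p) ^ N * (1 - q) ^ M)) * hX + (-((N:ℝ) ^ i * p ^ i * (M:ℝ) ^ j * q ^ j * ((i + j).choose i : ℝ) * (i.factorial : ℝ) * (j.factorial : ℝ) * (1 - p) ^ N * (1 - q) ^ M) * (((3:ℝ) / 4) ^ i * (4 / 3) ^ i)) * hY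
    _ ≤ (N.choose i : ℝ) * p ^ i * (1 - p) ^ (N - i) *
        ((M.choose j : ℝ) * q ^ j * (1 - q) ^ (M - j)) := by
        apply mul_le_mul
        · apply mul_le_mul
          · exact mul_le_mul_of_nonneg_right e1 (by positivity)
          · exact e3
          · exact pow_nonneg (by linarith) N
          · positivity
        · apply mul_le_mul
          · exact mul_le_mul_of_nonneg_right e2 (by positivity)
          · exact e4
          · exact pow_nonneg (by linarith) M
          · positivity
        · exact mul_nonneg (by positivity) (pow_nonneg (by linarith) M)
        · exact mul_nonneg (by positivity) (pow_nonneg (by linarith) (N - i))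
    _ = (N.choose i : ℝ) * p ^ i * (1 - p) ^ (N - i) *
        (M.choose j : ℝ) * q ^ j * (1 - q) ^ (M - j) := by ring

theorem binom_sum_pmf_lower (kp kq x t r : ℕ) (p q : ℝ)
    (hkp : 1 ≤ kp) (hkq : 1 ≤ kq) (hx : 1 ≤ x) (ht : 1 ≤ t) (hr : 1 ≤ r)
    (hxt : 4 * r ≤ x * t)
    (hq0 : 0 < q) (hqp : q ≤ p) (hp : p ≤ 1/2)
    (φ : ℝ) (hφ : φ = kp * p + kq * q) :
    (∑ i ∈ Finset.range (r + 1),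
        ((kp * x * t).choose i : ℝ) * p ^ i * (1 - p) ^ (kp * x * t - i) *
        ((kq * x * t).choose (r - i) : ℝ) * q ^ (r - i) * (1 - q) ^ (kq * x * t - (r - i)))
      ≥ (φ * x * t) ^ r / ((4/3 : ℝ) ^ r * (r.factorial : ℝ)) *
          (1 - p) ^ (x * t * kp) * (1 - q) ^ (x * t * kq) := by
  subst hφ
  set N := kp * x * t with hNdef
  set M := kq * x * t with hMdef
  have hNxt : x * t ≤ N := by
    calc x * t = 1 * (x * t) := by ring
    _ ≤ kp * (x * t) := Nat.mul_le_mul_right _ hkp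
    _ = N := by rw [hNdef]; ring
  have hMxt : x * t ≤ M := by
    calc x * t = 1 * (x * t) := by ring
    _ ≤ kq * (x * t) := Nat.mul_le_mul_right _ hkq
    _ = M := by rw [hMdef]; ring
  have hexp1 : x * t * kp = N := by rw [hNdef]; ring
  have hexp2 : x * t * kq = M := by rw [hMdef]; ring
  rw [hexp1, hexp2, ge_iff_le]
  have hsum : (((kp:ℝ) * p + (kq:ℝ) * q) * x * t) ^ r
      = ∑ i ∈ range (r + 1), ((N:ℝ) * p) ^ i * ((M:ℝ) * q) ^ (r - i) * (r.choose i : ℝ) := by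
    have : ((kp:ℝ) * p + (kq:ℝ) * q) * x * t = (N:ℝ) * p + (M:ℝ) * q := by
      rw [hNdef, hMdef]; push_cast; ring
    rw [this, add_pow]
  rw [hsum, Finset.sum_div, Finset.sum_mul, Finset.sum_mul]
  apply Finset.sum_le_sum
  intro i hi
  rw [mem_range] at hi
  have hij : i ≤ r := by omega
  obtain ⟨j, rfl⟩ : ∃ j, r = i + j := ⟨r - i, by omega⟩
  rw [Nat.add_sub_cancel_left]
  have := term_lb N M i j p q hq0 hqp hp (by omega) (by omega)
  calc ((N:ℝ) * p) ^ i * ((M:ℝ) * q) ^ j * ((i+j).choose i : ℝ) /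
        ((4/3 : ℝ) ^ (i+j) * ((i+j).factorial : ℝ)) * (1 - p) ^ N * (1 - q) ^ M
      ≤ (N.choose i : ℝ) * p ^ i * (1 - p) ^ (N - i) *
        (M.choose j : ℝ) * q ^ j * (1 - q) ^ (M - j) := this
end

section
/- Let π_r(t) = Pr[Bin(k_p t, p) + Bin(k_q t, q) ≥ r] with independent binomials. For any real x ≥ 1 with xt, t positive integers, r ≥ 1, t ≥ 4r, p ≥ q in (0, 1/2], and φ x t ≤ 1/3 where φ = k_p p + k_q q, we have π_r(xt) ≤ 3 (4x/(3(1-p)))^r π_r(t). -/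
open Finset

private lemma conv_sum (a b : ℝ) (n : ℕ) :
    ∑ i ∈ Finset.range (n + 1),
        a ^ i / (Nat.factorial i) * (b ^ (n - i) / (Nat.factorial (n - i)))
      = (a + b) ^ n / (Nat.factorial n) := by
  rw [add_pow, Finset.sum_div]
  refine Finset.sum_congr rfl fun i hi => ?_
  have hin : i ≤ n := Nat.lt_succ_iff.mp (Finset.mem_range.mp hi)
  have h : ((n.choose i : ℝ)) * (Nat.factorial i) * (Nat.factorial (n - i)) = (Nat.factorial n) := by
    exact_mod_cast congrArg (Nat.cast : ℕ → ℝ) (Nat.choose_mul_factorial_mul_factorial hin)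
  have h1 : (0:ℝ) < (Nat.factorial i : ℝ) := by exact_mod_cast Nat.factorial_pos i
  have h2 : (0:ℝ) < (Nat.factorial (n - i) : ℝ) := by exact_mod_cast Nat.factorial_pos (n-i)
  have h3 : (0:ℝ) < (Nat.factorial n : ℝ) := by exact_mod_cast Nat.factorial_pos n
  field_simp
  linear_combination (-(a ^ i * b ^ (n - i))) * h

private lemma geo_sum (r N : ℕ) (y : ℝ) (hy0 : 0 ≤ y) (hy3 : y ≤ 1/3) :
    ∑ r' ∈ Finset.Icc r N, y ^ r' / (Nat.factorial r' : ℝ)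
      ≤ 3/2 * (y ^ r / (Nat.factorial r : ℝ)) := by
  have hF : (0:ℝ) < (Nat.factorial r : ℝ) := by exact_mod_cast Nat.factorial_pos r
  rw [← Finset.Ico_add_one_right_eq_Icc, Finset.sum_Ico_eq_sum_range]
  calc ∑ j ∈ Finset.range (N + 1 - r), y ^ (r + j) / (Nat.factorial (r + j) : ℝ)
      ≤ ∑ j ∈ Finset.range (N + 1 - r), (y ^ r / (Nat.factorial r : ℝ)) * (1/3) ^ j := by
        apply Finset.sum_le_sum
        intro j _
        have hfac : (Nat.factorial r : ℝ) ≤ (Nat.factorial (r + j) : ℝ) := by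
          exact_mod_cast Nat.factorial_le (Nat.le_add_right r j)
        calc y ^ (r + j) / (Nat.factorial (r + j) : ℝ)
            ≤ y ^ (r + j) / (Nat.factorial r : ℝ) := by gcongr
          _ = (y ^ r / (Nat.factorial r : ℝ)) * y ^ j := by rw [pow_add]; ring
          _ ≤ (y ^ r / (Nat.factorial r : ℝ)) * (1/3) ^ j := by
              have hb : y ^ j ≤ (1/3:ℝ) ^ j := pow_le_pow_left₀ hy0 hy3 j
              have h0 : 0 ≤ y ^ r / (Nat.factorial r : ℝ) := by positivity
              exact mul_le_mul_of_nonneg_left hb h0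
    _ = (y ^ r / (Nat.factorial r : ℝ)) * ∑ j ∈ Finset.range (N + 1 - r), (1/3:ℝ) ^ j := by
        rw [Finset.mul_sum]
    _ ≤ (y ^ r / (Nat.factorial r : ℝ)) * (3/2) := by
        gcongr
        · set n := N + 1 - r
          have := geom_sum_eq (by norm_num : (1/3:ℝ) ≠ 1) n
          rw [this, show ((1/3:ℝ)^n - 1)/(1/3 - 1) = (1 - (1/3)^n) * (3/2) by ring]
          have : (0:ℝ) ≤ (1/3:ℝ)^n := by positivity
          nlinarith
    _ = 3/2 * (y ^ r / (Nat.factorial r : ℝ)) := by ring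

set_option maxHeartbeats 2000000 in
theorem pi_r_scale_up (kp kq t xt r : ℕ) (x p q : ℝ)
    (hkp : 1 ≤ kp) (hkq : 1 ≤ kq) (ht : 1 ≤ t) (hxt0 : 1 ≤ xt)
    (hx : 1 ≤ x) (hxt : (xt : ℝ) = x * t)
    (hr : 1 ≤ r) (htr : 4 * r ≤ t)
    (hq0 : 0 < q) (hqp : q ≤ p) (hp : p ≤ 1/2)
    (φ : ℝ) (hφ : φ = kp * p + kq * q)
    (hsmall : φ * x * t ≤ 1/3)
    (π : ℕ → ℝ)
    (hπ : ∀ s : ℕ, π s = ∑ r' ∈ Finset.Icc r ((kp + kq) * s),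
      ∑ i ∈ Finset.range (r' + 1),
        ((kp * s).choose i : ℝ) * p ^ i * (1 - p) ^ (kp * s - i) *
        ((kq * s).choose (r' - i) : ℝ) * q ^ (r' - i) * (1 - q) ^ (kq * s - (r' - i))) :
    π xt ≤ 3 * (4 * x / (3 * (1 - p))) ^ r * π t := by
  have hp0 : 0 < p := lt_of_lt_of_le hq0 hqp
  have hp1 : (0:ℝ) < 1 - p := by linarith
  have hq1 : (0:ℝ) < 1 - q := by linarith
  have hkp' : (1:ℝ) ≤ (kp:ℝ) := by exact_mod_cast hkp
  have hkq' : (1:ℝ) ≤ (kq:ℝ) := by exact_mod_cast hkq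
  have ht' : (1:ℝ) ≤ (t:ℝ) := by exact_mod_cast ht
  have hφ0 : 0 < φ := by rw [hφ]; nlinarith
  have hA0 : (0:ℝ) < φ * t := by nlinarith
  have hA3 : φ * t ≤ 1/3 := by nlinarith
  have hFr : (0:ℝ) < (Nat.factorial r : ℝ) := by exact_mod_cast Nat.factorial_pos r
  have hxt3 : φ * (xt:ℝ) ≤ 1/3 := by rw [hxt]; nlinarith
  have hxt0' : (0:ℝ) ≤ φ * (xt:ℝ) := by
    have : (0:ℝ) ≤ (xt:ℝ) := Nat.cast_nonneg xt
    positivity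
  -- Upper bound on π xt
  have hub : π xt ≤ 3/2 * ((φ * (xt:ℝ))^r / (Nat.factorial r : ℝ)) := by
    rw [hπ xt]
    have h1 : ∀ r' ∈ Finset.Icc r ((kp+kq)*xt),
        (∑ i ∈ Finset.range (r'+1), ((kp*xt).choose i : ℝ) * p^i * (1-p)^(kp*xt - i) *
          ((kq*xt).choose (r'-i):ℝ) * q^(r'-i) * (1-q)^(kq*xt - (r'-i)))
        ≤ (φ * (xt:ℝ))^r' / (Nat.factorial r' : ℝ) := by
      intro r' _
      have key := conv_sum (((kp*xt : ℕ):ℝ) * p) (((kq*xt : ℕ):ℝ) * q) r'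
      have hab : ((kp*xt : ℕ):ℝ) * p + ((kq*xt : ℕ):ℝ) * q = φ * (xt:ℝ) := by
        push_cast; rw [hφ]; ring
      rw [hab] at key
      rw [← key]
      apply Finset.sum_le_sum
      intro i _
      have e1 : ((kp*xt).choose i : ℝ) * p ^ i
          ≤ (((kp*xt:ℕ):ℝ) * p)^i / (Nat.factorial i : ℝ) := by
        rw [mul_pow]
        calc ((kp*xt).choose i : ℝ) * p ^ i
            ≤ (((kp*xt:ℕ):ℝ)^i / (Nat.factorial i : ℝ)) * p ^ i :=
              mul_le_mul_of_nonneg_right (Nat.choose_le_pow_div i (kp*xt)) (pow_nonneg hp0.le i)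
          _ = ((kp*xt:ℕ):ℝ)^i * p^i / (Nat.factorial i : ℝ) := by ring
      have e2 : ((kq*xt).choose (r'-i) : ℝ) * q ^ (r'-i)
          ≤ (((kq*xt:ℕ):ℝ) * q)^(r'-i) / (Nat.factorial (r'-i) : ℝ) := by
        rw [mul_pow]
        calc ((kq*xt).choose (r'-i) : ℝ) * q ^ (r'-i)
            ≤ (((kq*xt:ℕ):ℝ)^(r'-i) / (Nat.factorial (r'-i) : ℝ)) * q ^ (r'-i) :=
              mul_le_mul_of_nonneg_right (Nat.choose_le_pow_div (r'-i) (kq*xt)) (pow_nonneg hq0.le _)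
          _ = ((kq*xt:ℕ):ℝ)^(r'-i) * q^(r'-i) / (Nat.factorial (r'-i) : ℝ) := by ring
      have f1 : (1-p)^(kp*xt - i) ≤ 1 := pow_le_one₀ hp1.le (by linarith)
      have f2 : (1-q)^(kq*xt - (r'-i)) ≤ 1 := pow_le_one₀ hq1.le (by linarith)
      have nn1 : (0:ℝ) ≤ ((kp*xt).choose i : ℝ) * p ^ i :=
        mul_nonneg (Nat.cast_nonneg _) (pow_nonneg hp0.le _)
      have nn2 : (0:ℝ) ≤ ((kq*xt).choose (r'-i) : ℝ) * q ^ (r'-i) :=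
        mul_nonneg (Nat.cast_nonneg _) (pow_nonneg hq0.le _)
      have nn3 : (0:ℝ) ≤ (1-p)^(kp*xt - i) * (1-q)^(kq*xt - (r'-i)) :=
        mul_nonneg (pow_nonneg hp1.le _) (pow_nonneg hq1.le _)
      have nn4 : (0:ℝ) ≤ (((kp*xt:ℕ):ℝ) * p)^i / (Nat.factorial i : ℝ)
          * ((((kq*xt:ℕ):ℝ) * q)^(r'-i) / (Nat.factorial (r'-i) : ℝ)) := by positivity
      calc ((kp*xt).choose i : ℝ) * p^i * (1-p)^(kp*xt - i) *
            ((kq*xt).choose (r'-i):ℝ) * q^(r'-i) * (1-q)^(kq*xt - (r'-i))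
          = (((kp*xt).choose i : ℝ) * p^i) * (((kq*xt).choose (r'-i):ℝ) * q^(r'-i))
            * ((1-p)^(kp*xt - i) * (1-q)^(kq*xt - (r'-i))) := by ring
        _ ≤ ((((kp*xt:ℕ):ℝ) * p)^i / (Nat.factorial i : ℝ))
            * ((((kq*xt:ℕ):ℝ) * q)^(r'-i) / (Nat.factorial (r'-i) : ℝ)) * 1 := by
            apply mul_le_mul _ _ nn3 nn4
            · exact mul_le_mul e1 e2 nn2 (by positivity)
            · exact mul_le_one₀ f1 (pow_nonneg hq1.le _) f2
        _ = (((kp*xt:ℕ):ℝ) * p)^i / (Nat.factorial i : ℝ)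
            * ((((kq*xt:ℕ):ℝ) * q)^(r'-i) / (Nat.factorial (r'-i) : ℝ)) := by ring
    calc (∑ r' ∈ Finset.Icc r ((kp+kq)*xt),
          ∑ i ∈ Finset.range (r'+1), ((kp*xt).choose i : ℝ) * p^i * (1-p)^(kp*xt - i) *
            ((kq*xt).choose (r'-i):ℝ) * q^(r'-i) * (1-q)^(kq*xt - (r'-i)))
        ≤ ∑ r' ∈ Finset.Icc r ((kp+kq)*xt), (φ * (xt:ℝ))^r' / (Nat.factorial r' : ℝ) :=
          Finset.sum_le_sum h1
      _ ≤ 3/2 * ((φ * (xt:ℝ))^r / (Nat.factorial r : ℝ)) := geo_sum r _ _ hxt0' hxt3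
  -- Lower bound on π t
  have hE23 : (2:ℝ)/3 ≤ (1-p)^(kp*t) * (1-q)^(kq*t) := by
    have hkq0 : (0:ℝ) ≤ (kq:ℝ) := by linarith
    have hkp0 : (0:ℝ) ≤ (kp:ℝ) := by linarith
    have ht0 : (0:ℝ) ≤ (t:ℝ) := by linarith
    have hup : ((kp*t : ℕ):ℝ) * p ≤ φ * t := by
      push_cast; rw [hφ]
      nlinarith [mul_nonneg (mul_nonneg hkq0 hq0.le) ht0]
    have huq : ((kq*t : ℕ):ℝ) * q ≤ φ * t := by
      push_cast; rw [hφ]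
      nlinarith [mul_nonneg (mul_nonneg hkp0 hp0.le) ht0]
    have hup0 : (0:ℝ) ≤ ((kp*t : ℕ):ℝ) * p := mul_nonneg (Nat.cast_nonneg _) hp0.le
    have huq0 : (0:ℝ) ≤ ((kq*t : ℕ):ℝ) * q := mul_nonneg (Nat.cast_nonneg _) hq0.le
    have b1 : 1 - ((kp*t : ℕ):ℝ) * p ≤ (1-p)^(kp*t) := by
      have h := one_add_mul_le_pow (a := -p) (by linarith) (kp*t)
      calc 1 - ((kp*t : ℕ):ℝ) * p = 1 + ((kp*t : ℕ):ℝ) * (-p) := by ring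
        _ ≤ (1 + -p)^(kp*t) := h
        _ = (1-p)^(kp*t) := by rw [show (1:ℝ) + -p = 1 - p by ring]
    have b2 : 1 - ((kq*t : ℕ):ℝ) * q ≤ (1-q)^(kq*t) := by
      have h := one_add_mul_le_pow (a := -q) (by linarith) (kq*t)
      calc 1 - ((kq*t : ℕ):ℝ) * q = 1 + ((kq*t : ℕ):ℝ) * (-q) := by ring
        _ ≤ (1 + -q)^(kq*t) := h
        _ = (1-q)^(kq*t) := by rw [show (1:ℝ) + -q = 1 - q by ring]
    have hb2nn : (0:ℝ) ≤ 1 - ((kq*t : ℕ):ℝ) * q := by linarith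
    have hsum : ((kp*t : ℕ):ℝ) * p + ((kq*t : ℕ):ℝ) * q = φ * t := by
      push_cast; rw [hφ]; ring
    calc (2:ℝ)/3 ≤ (1 - ((kp*t : ℕ):ℝ) * p) * (1 - ((kq*t : ℕ):ℝ) * q) := by
          nlinarith [mul_nonneg hup0 huq0]
      _ ≤ (1-p)^(kp*t) * (1-q)^(kq*t) :=
          mul_le_mul b1 b2 hb2nn (pow_nonneg hp1.le _)
  have hlb : 2/3 * ((3/4 * (φ*t))^r / (Nat.factorial r : ℝ)) ≤ π t := by
    rw [hπ t]
    have hrmem : r ∈ Finset.Icc r ((kp+kq)*t) := by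
      rw [Finset.mem_Icc]
      refine ⟨le_refl r, ?_⟩
      calc r ≤ t := by omega
        _ ≤ (kp+kq)*t := Nat.le_mul_of_pos_left t (by omega)
    have hnn : ∀ r' ∈ Finset.Icc r ((kp+kq)*t), (0:ℝ) ≤
        ∑ i ∈ Finset.range (r'+1), ((kp*t).choose i : ℝ) * p^i * (1-p)^(kp*t - i) *
          ((kq*t).choose (r'-i):ℝ) * q^(r'-i) * (1-q)^(kq*t - (r'-i)) := by
      intro r' _
      apply Finset.sum_nonneg
      intro i _
      have h1 : (0:ℝ) ≤ ((kp*t).choose i : ℝ) := Nat.cast_nonneg _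
      have h2 : (0:ℝ) ≤ ((kq*t).choose (r'-i) : ℝ) := Nat.cast_nonneg _
      have h3 : (0:ℝ) ≤ p^i := pow_nonneg hp0.le _
      have h4 : (0:ℝ) ≤ q^(r'-i) := pow_nonneg hq0.le _
      have h5 : (0:ℝ) ≤ (1-p)^(kp*t-i) := pow_nonneg hp1.le _
      have h6 : (0:ℝ) ≤ (1-q)^(kq*t-(r'-i)) := pow_nonneg hq1.le _
      positivity
    refine le_trans ?_ (Finset.single_le_sum hnn hrmem)
    have key := conv_sum ((3/4 * ((kp*t:ℕ):ℝ)) * p) ((3/4 * ((kq*t:ℕ):ℝ)) * q) r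
    have hab : (3/4 * ((kp*t:ℕ):ℝ)) * p + (3/4 * ((kq*t:ℕ):ℝ)) * q = 3/4 * (φ*t) := by
      push_cast; rw [hφ]; ring
    rw [hab] at key
    have hEnn : (0:ℝ) ≤ (1-p)^(kp*t) * (1-q)^(kq*t) :=
      mul_nonneg (pow_nonneg hp1.le _) (pow_nonneg hq1.le _)
    calc 2/3 * ((3/4 * (φ*t))^r / (Nat.factorial r : ℝ))
        ≤ ((1-p)^(kp*t) * (1-q)^(kq*t)) * ((3/4 * (φ*t))^r / (Nat.factorial r : ℝ)) :=
          mul_le_mul_of_nonneg_right hE23 (by positivity)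
      _ = (∑ i ∈ Finset.range (r+1), (3/4 * ((kp*t:ℕ):ℝ) * p)^i / (Nat.factorial i : ℝ)
            * ((3/4 * ((kq*t:ℕ):ℝ) * q)^(r-i) / (Nat.factorial (r-i) : ℝ)))
          * ((1-p)^(kp*t) * (1-q)^(kq*t)) := by rw [key]; ring
      _ = ∑ i ∈ Finset.range (r+1), (3/4 * ((kp*t:ℕ):ℝ) * p)^i / (Nat.factorial i : ℝ)
            * ((3/4 * ((kq*t:ℕ):ℝ) * q)^(r-i) / (Nat.factorial (r-i) : ℝ))
          * ((1-p)^(kp*t) * (1-q)^(kq*t)) := Finset.sum_mul _ _ _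
      _ ≤ ∑ i ∈ Finset.range (r+1), ((kp*t).choose i : ℝ) * p^i * (1-p)^(kp*t - i) *
            ((kq*t).choose (r-i):ℝ) * q^(r-i) * (1-q)^(kq*t - (r-i)) := by
          apply Finset.sum_le_sum
          intro i hi
          have hir : i ≤ r := Nat.lt_succ_iff.mp (Finset.mem_range.mp hi)
          have hikpt : i ≤ kp*t := by
            calc i ≤ r := hir
              _ ≤ t := by omega
              _ ≤ kp*t := Nat.le_mul_of_pos_left t (by omega)
          have hjkqt : r - i ≤ kq*t := by
            have : r ≤ t := by omega
            have : t ≤ kq*t := Nat.le_mul_of_pos_left t (by omega)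
            omega
          -- choose lower bounds
          have g1 : (3/4 * ((kp*t:ℕ):ℝ))^i / (Nat.factorial i : ℝ) ≤ ((kp*t).choose i : ℝ) := by
            refine le_trans ?_ (Nat.pow_le_choose i (kp*t))
            gcongr
            have hc : ((kp*t+1-i : ℕ):ℝ) = ((kp*t:ℕ):ℝ) + 1 - i := by
              have : i ≤ kp*t+1 := by omega
              push_cast [this]; ring
            rw [hc]
            have hcast1 : ((i:ℕ):ℝ) ≤ (r:ℝ) := by exact_mod_cast hir
            have hcast2 : 4*(r:ℝ) ≤ ((kp*t:ℕ):ℝ) := by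
              have : 4*r ≤ kp*t := le_trans htr (Nat.le_mul_of_pos_left t (by omega))
              exact_mod_cast this
            linarith
          have g2 : (3/4 * ((kq*t:ℕ):ℝ))^(r-i) / (Nat.factorial (r-i) : ℝ)
              ≤ ((kq*t).choose (r-i) : ℝ) := by
            refine le_trans ?_ (Nat.pow_le_choose (r-i) (kq*t))
            gcongr
            have hc : ((kq*t+1-(r-i) : ℕ):ℝ) = ((kq*t:ℕ):ℝ) + 1 - (r-i:ℕ) := by
              have : r-i ≤ kq*t+1 := by omega
              push_cast [this]; ring
            rw [hc]
            have hcast1 : ((r-i:ℕ):ℝ) ≤ (r:ℝ) := by exact_mod_cast Nat.sub_le r i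
            have hcast2 : 4*(r:ℝ) ≤ ((kq*t:ℕ):ℝ) := by
              have : 4*r ≤ kq*t := le_trans htr (Nat.le_mul_of_pos_left t (by omega))
              exact_mod_cast this
            linarith
          have g1' : (3/4 * ((kp*t:ℕ):ℝ) * p)^i / (Nat.factorial i : ℝ)
              ≤ ((kp*t).choose i : ℝ) * p^i := by
            rw [mul_pow]
            calc (3/4 * ((kp*t:ℕ):ℝ))^i * p^i / (Nat.factorial i : ℝ)
                = ((3/4 * ((kp*t:ℕ):ℝ))^i / (Nat.factorial i : ℝ)) * p^i := by ring
              _ ≤ ((kp*t).choose i : ℝ) * p^i :=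
                  mul_le_mul_of_nonneg_right g1 (pow_nonneg hp0.le _)
          have g2' : (3/4 * ((kq*t:ℕ):ℝ) * q)^(r-i) / (Nat.factorial (r-i) : ℝ)
              ≤ ((kq*t).choose (r-i) : ℝ) * q^(r-i) := by
            rw [mul_pow]
            calc (3/4 * ((kq*t:ℕ):ℝ))^(r-i) * q^(r-i) / (Nat.factorial (r-i) : ℝ)
                = ((3/4 * ((kq*t:ℕ):ℝ))^(r-i) / (Nat.factorial (r-i) : ℝ)) * q^(r-i) := by ring
              _ ≤ ((kq*t).choose (r-i) : ℝ) * q^(r-i) :=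
                  mul_le_mul_of_nonneg_right g2 (pow_nonneg hq0.le _)
          have g3 : (1-p)^(kp*t) * (1-q)^(kq*t)
              ≤ (1-p)^(kp*t - i) * (1-q)^(kq*t - (r-i)) := by
            apply mul_le_mul
            · exact pow_le_pow_of_le_one hp1.le (by linarith) (Nat.sub_le _ _)
            · exact pow_le_pow_of_le_one hq1.le (by linarith) (Nat.sub_le _ _)
            · exact pow_nonneg hq1.le _
            · exact pow_nonneg hp1.le _
          calc (3/4 * ((kp*t:ℕ):ℝ) * p)^i / (Nat.factorial i : ℝ)
                * ((3/4 * ((kq*t:ℕ):ℝ) * q)^(r-i) / (Nat.factorial (r-i) : ℝ))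
                * ((1-p)^(kp*t) * (1-q)^(kq*t))
              ≤ (((kp*t).choose i : ℝ) * p^i) * (((kq*t).choose (r-i) : ℝ) * q^(r-i))
                * ((1-p)^(kp*t - i) * (1-q)^(kq*t - (r-i))) := by
                apply mul_le_mul (mul_le_mul g1' g2' (by positivity) ?_) g3 hEnn ?_
                · exact mul_nonneg (Nat.cast_nonneg _) (pow_nonneg hp0.le _)
                · positivity
            _ = ((kp*t).choose i : ℝ) * p^i * (1-p)^(kp*t - i) *
                ((kq*t).choose (r-i):ℝ) * q^(r-i) * (1-q)^(kq*t - (r-i)) := by ring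
  -- Combine
  have hcoef : (0:ℝ) < 4 * x / (3 * (1 - p)) := by positivity
  have hxA : φ * (xt:ℝ) = x * (φ * t) := by rw [hxt]; ring
  have hxAnn : (0:ℝ) ≤ x * (φ * t) := by positivity
  have hdiv : x * (φ * t) ≤ x * (φ * t) / (1 - p) := by
    rw [le_div_iff₀ hp1]
    nlinarith
  have e : (4*x/(3*(1-p)))^r * (3/4*(φ*t))^r = (x * (φ * t)/(1-p))^r := by
    rw [← mul_pow]
    congr 1
    field_simp
  calc π xt ≤ 3/2 * ((φ * (xt:ℝ))^r / (Nat.factorial r : ℝ)) := hub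
    _ = 3/2 * ((x * (φ * t))^r / (Nat.factorial r : ℝ)) := by rw [hxA]
    _ ≤ 2 * ((x * (φ * t)/(1-p))^r / (Nat.factorial r : ℝ)) := by
        have h1 : (x * (φ * t))^r ≤ (x * (φ * t)/(1-p))^r := pow_le_pow_left₀ hxAnn hdiv r
        have h2 : (0:ℝ) ≤ (x * (φ * t))^r := pow_nonneg hxAnn r
        have h3 : (x * (φ * t))^r / (Nat.factorial r : ℝ)
            ≤ (x * (φ * t)/(1-p))^r / (Nat.factorial r : ℝ) := by gcongr
        have h4 : (0:ℝ) ≤ (x * (φ * t))^r / (Nat.factorial r : ℝ) := by positivity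
        linarith
    _ = 3 * (4*x/(3*(1-p)))^r * (2/3 * ((3/4*(φ*t))^r / (Nat.factorial r : ℝ))) := by
        rw [show (3:ℝ) * (4*x/(3*(1-p)))^r * (2/3 * ((3/4*(φ*t))^r / (Nat.factorial r : ℝ)))
          = 2 * ((4*x/(3*(1-p)))^r * (3/4*(φ*t))^r) / (Nat.factorial r : ℝ) by ring, e]
        ring
    _ ≤ 3 * (4*x/(3*(1-p)))^r * π t := by
        have : (0:ℝ) ≤ 3 * (4*x/(3*(1-p)))^r := by positivity
        exact mul_le_mul_of_nonneg_left hlb this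
end

section
/- Let π_r(t) = Pr[Bin(k_p t, p) + Bin(k_q t, q) ≥ r]. Under the hypotheses t ≥ 4r, p ≥ q in (0, 1/2], φ x t ≤ 1/3, xt an integer, and additionally 3x(1-p) > 4, we have π_r(t) ≤ 4 (4/(3x(1-p)))^r π_r(xt). -/
set_option maxHeartbeats 1000000
open Finset

lemma sum_pow_div_factorial (u v : ℝ) (m : ℕ) :
    ∑ i ∈ Finset.range (m+1), u ^ i / (Nat.factorial i) * (v ^ (m - i) / (Nat.factorial (m - i)))
      = (u + v) ^ m / (Nat.factorial m) := by
  rw [add_pow, Finset.sum_div]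
  refine Finset.sum_congr rfl fun i hi => ?_
  have him : i ≤ m := Nat.lt_succ_iff.mp (Finset.mem_range.mp hi)
  rw [Nat.cast_choose ℝ him]
  have h1 : (Nat.factorial i : ℝ) ≠ 0 := Nat.cast_ne_zero.mpr (Nat.factorial_ne_zero _)
  have h2 : (Nat.factorial (m - i) : ℝ) ≠ 0 := Nat.cast_ne_zero.mpr (Nat.factorial_ne_zero _)
  have h3 : (Nat.factorial m : ℝ) ≠ 0 := Nat.cast_ne_zero.mpr (Nat.factorial_ne_zero _)
  field_simp

lemma choose_lower_s13 (N i r : ℕ) (hir : i ≤ r) (hN : 4*r ≤ N) :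
    ((3/4 : ℝ) * N) ^ i ≤ (N.choose i : ℝ) * (Nat.factorial i) := by
  have h1 : (N + 1 - i)^i ≤ N.descFactorial i := Nat.pow_sub_le_descFactorial N i
  have h2 : N.descFactorial i = (Nat.factorial i) * N.choose i :=
    Nat.descFactorial_eq_factorial_mul_choose N i
  have hiN1 : i ≤ N + 1 := by omega
  have h3 : (3/4:ℝ) * N ≤ ((N + 1 - i : ℕ) : ℝ) := by
    have hc : ((N + 1 - i : ℕ) : ℝ) = (N:ℝ) + 1 - i := by
      push_cast [Nat.cast_sub hiN1]; ring
    have hi' : (i:ℝ) ≤ r := by exact_mod_cast hir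
    have hN' : 4*(r:ℝ) ≤ N := by exact_mod_cast hN
    rw [hc]; linarith
  calc ((3/4:ℝ)*N)^i ≤ (((N+1-i:ℕ)):ℝ)^i := pow_le_pow_left₀ (by positivity) h3 i
    _ = (((N+1-i)^i : ℕ):ℝ) := by push_cast; ring
    _ ≤ (N.descFactorial i : ℝ) := Nat.cast_le.mpr h1
    _ = (N.choose i : ℝ) * (Nat.factorial i) := by rw [h2]; push_cast; ring

lemma bern (p : ℝ) (hp : p ≤ 2) (n : ℕ) : 1 - n * p ≤ (1 - p)^n := by
  have := one_add_mul_le_pow (a := -p) (by linarith) n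
  have h : (1 + -p) = 1 - p := by ring
  rw [h] at this; linarith

theorem pi_r_scale_down (kp kq t xt r : ℕ) (x p q : ℝ)
    (hkp : 1 ≤ kp) (hkq : 1 ≤ kq) (ht : 1 ≤ t) (hxt0 : 1 ≤ xt)
    (hx : 1 ≤ x) (hxt : (xt : ℝ) = x * t)
    (hr : 1 ≤ r) (htr : 4 * r ≤ t)
    (hq0 : 0 < q) (hqp : q ≤ p) (hp : p ≤ 1/2)
    (φ : ℝ) (hφ : φ = kp * p + kq * q)
    (hsmall : φ * x * t ≤ 1/3)
    (hbig : 3 * x * (1 - p) > 4)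
    (π : ℕ → ℝ)
    (hπ : ∀ s : ℕ, π s = ∑ r' ∈ Finset.Icc r ((kp + kq) * s),
      ∑ i ∈ Finset.range (r' + 1),
        ((kp * s).choose i : ℝ) * p ^ i * (1 - p) ^ (kp * s - i) *
        ((kq * s).choose (r' - i) : ℝ) * q ^ (r' - i) * (1 - q) ^ (kq * s - (r' - i))) :
    π t ≤ 4 * (4 / (3 * x * (1 - p))) ^ r * π xt := by
  -- basic facts
  have hp0 : 0 < p := lt_of_lt_of_le hq0 hqp
  have hq1 : q ≤ 1/2 := hqp.trans hp
  have h1p0 : (0:ℝ) ≤ 1 - p := by linarith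
  have h1p1 : (1:ℝ) - p ≤ 1 := by linarith
  have h1q0 : (0:ℝ) ≤ 1 - q := by linarith
  have h1q1 : (1:ℝ) - q ≤ 1 := by linarith
  have hx0 : (0:ℝ) < x := lt_of_lt_of_le one_pos hx
  have ht0 : (0:ℝ) < t := by exact_mod_cast ht
  have hkp1 : (1:ℝ) ≤ kp := by exact_mod_cast hkp
  have hkq1 : (1:ℝ) ≤ kq := by exact_mod_cast hkq
  have hφ0 : 0 < φ := by
    rw [hφ]; nlinarith
  have hφt0 : (0:ℝ) ≤ φ * t := by positivity
  have hφt13 : φ * t ≤ 1/3 := by nlinarith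
  have htxt : t ≤ xt := by
    have : (t:ℝ) ≤ xt := by rw [hxt]; nlinarith
    exact_mod_cast this
  have hxtr : 4 * r ≤ xt := le_trans htr htxt
  have hab : ((kp*t):ℝ) * p + ((kq*t):ℝ) * q = φ * t := by
    rw [hφ]; push_cast; ring
  have hAB : ((kp*xt):ℝ) * p + ((kq*xt):ℝ) * q = φ * x * t := by
    rw [hφ]; push_cast; rw [hxt]; ring
  have hAp0 : (0:ℝ) ≤ ((kp*xt):ℝ) * p := by positivity
  have hBq0 : (0:ℝ) ≤ ((kq*xt):ℝ) * q := by positivity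
  -- Bernoulli product lower bound
  have hprod : (2/3 : ℝ) ≤ (1-p)^(kp*xt) * (1-q)^(kq*xt) := by
    have h1 : 1 - ((kp:ℝ)*(xt:ℝ)) * p ≤ (1-p)^(kp*xt) := by
      have := bern p (by linarith) (kp*xt); push_cast at this; exact this
    have h2 : 1 - ((kq:ℝ)*(xt:ℝ)) * q ≤ (1-q)^(kq*xt) := by
      have := bern q (by linarith) (kq*xt); push_cast at this; exact this
    have hA3 : ((kp*xt):ℝ) * p ≤ 1/3 := by nlinarith
    have hB3 : ((kq*xt):ℝ) * q ≤ 1/3 := by nlinarith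
    have hmul : (1 - ((kp*xt):ℝ)*p) * (1 - ((kq*xt):ℝ)*q) ≤ (1-p)^(kp*xt) * (1-q)^(kq*xt) := by
      apply mul_le_mul h1 h2 (by linarith) (by positivity)
    nlinarith [mul_nonneg hAp0 hBq0]
  -- UPPER BOUND: π t ≤ (3/2) * (φ t)^r / r!
  have hupper : π t ≤ (3/2) * ((φ*t)^r / (Nat.factorial r)) := by
    rw [hπ t]
    have step1 : ∀ r' ∈ Finset.Icc r ((kp+kq)*t),
        (∑ i ∈ Finset.range (r' + 1),
          (((kp*t)).choose i : ℝ) * p ^ i * (1 - p) ^ ((kp*t) - i) *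
          (((kq*t)).choose (r' - i) : ℝ) * q ^ (r' - i) * (1 - q) ^ ((kq*t) - (r' - i)))
        ≤ (φ*t)^r' / (Nat.factorial r') := by
      intro r' _
      have hterm : ∀ i ∈ Finset.range (r'+1),
          (((kp*t)).choose i : ℝ) * p ^ i * (1 - p) ^ ((kp*t) - i) *
          (((kq*t)).choose (r' - i) : ℝ) * q ^ (r' - i) * (1 - q) ^ ((kq*t) - (r' - i))
          ≤ (((kp*t):ℝ)*p) ^ i / (Nat.factorial i) *
            ((((kq*t):ℝ)*q) ^ (r'-i) / (Nat.factorial (r'-i))) := by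
        intro i _
        have c1 : (((kp*t)).choose i : ℝ) ≤ ((kp*t):ℝ)^i / (Nat.factorial i) := by
          have := Nat.choose_le_pow_div (α := ℝ) i (kp*t)
          simpa using this
        have c2 : (((kq*t)).choose (r'-i) : ℝ) ≤ ((kq*t):ℝ)^(r'-i) / (Nat.factorial (r'-i)) := by
          have := Nat.choose_le_pow_div (α := ℝ) (r'-i) (kq*t)
          simpa using this
        have d1 : (1-p)^((kp*t)-i) ≤ 1 := pow_le_one₀ h1p0 h1p1
        have d2 : (1-q)^((kq*t)-(r'-i)) ≤ 1 := pow_le_one₀ h1q0 h1q1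
        calc (((kp*t)).choose i : ℝ) * p ^ i * (1 - p) ^ ((kp*t) - i) *
              (((kq*t)).choose (r' - i) : ℝ) * q ^ (r' - i) * (1 - q) ^ ((kq*t) - (r' - i))
            ≤ (((kp*t):ℝ)^i / (Nat.factorial i)) * p ^ i * 1 *
              (((kq*t):ℝ)^(r'-i) / (Nat.factorial (r'-i))) * q ^ (r' - i) * 1 := by
              gcongr <;> positivity
          _ = (((kp*t):ℝ)*p) ^ i / (Nat.factorial i) *
              ((((kq*t):ℝ)*q) ^ (r'-i) / (Nat.factorial (r'-i))) := by
              rw [mul_pow, mul_pow]; ring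
      calc (∑ i ∈ Finset.range (r' + 1),
            (((kp*t)).choose i : ℝ) * p ^ i * (1 - p) ^ ((kp*t) - i) *
            (((kq*t)).choose (r' - i) : ℝ) * q ^ (r' - i) * (1 - q) ^ ((kq*t) - (r' - i)))
          ≤ ∑ i ∈ Finset.range (r'+1), (((kp*t):ℝ)*p) ^ i / (Nat.factorial i) *
              ((((kq*t):ℝ)*q) ^ (r'-i) / (Nat.factorial (r'-i))) :=
            Finset.sum_le_sum hterm
        _ = (((kp*t):ℝ)*p + ((kq*t):ℝ)*q)^r' / (Nat.factorial r') := sum_pow_div_factorial _ _ r'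
        _ = (φ*t)^r' / (Nat.factorial r') := by rw [hab]
    have step2 : ∑ r' ∈ Finset.Icc r ((kp+kq)*t), (φ*t)^r' / (Nat.factorial r')
        ≤ (3/2) * ((φ*t)^r / (Nat.factorial r)) := by
      have key : ∀ r' ∈ Finset.Icc r ((kp+kq)*t),
          (φ*t)^r' / (Nat.factorial r') ≤ (φ*t)^r / (Nat.factorial r) * (1/3)^(r'-r) := by
        intro r' hr'
        have hrr' : r ≤ r' := (Finset.mem_Icc.mp hr').1
        have e1 : (φ*t)^r' = (φ*t)^r * (φ*t)^(r'-r) := by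
          rw [← pow_add]; congr 1; omega
        have e2 : (φ*t)^(r'-r) ≤ (1/3:ℝ)^(r'-r) := pow_le_pow_left₀ hφt0 (by linarith) _
        have e3 : (Nat.factorial r : ℝ) ≤ (Nat.factorial r' : ℝ) :=
          Nat.cast_le.mpr (Nat.factorial_le hrr')
        have e4 : (0:ℝ) < Nat.factorial r := by positivity
        calc (φ*t)^r' / (Nat.factorial r') ≤ ((φ*t)^r * (1/3)^(r'-r)) / (Nat.factorial r) := by
              rw [e1]
              apply div_le_div₀ (by positivity) (by
                apply mul_le_mul_of_nonneg_left e2 (by positivity)) e4 e3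
          _ = (φ*t)^r / (Nat.factorial r) * (1/3)^(r'-r) := by ring
      calc ∑ r' ∈ Finset.Icc r ((kp+kq)*t), (φ*t)^r' / (Nat.factorial r')
          ≤ ∑ r' ∈ Finset.Icc r ((kp+kq)*t), (φ*t)^r / (Nat.factorial r) * (1/3)^(r'-r) :=
            Finset.sum_le_sum key
        _ = (φ*t)^r / (Nat.factorial r) * ∑ r' ∈ Finset.Icc r ((kp+kq)*t), (1/3:ℝ)^(r'-r) := by
            rw [Finset.mul_sum]
        _ ≤ (φ*t)^r / (Nat.factorial r) * (3/2) := by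
            apply mul_le_mul_of_nonneg_left ?_ (by positivity)
            rw [← Finset.Ico_add_one_right_eq_Icc, Finset.sum_Ico_eq_sum_range]
            have : ∀ k, (1/3:ℝ)^(r + k - r) = (1/3:ℝ)^k := by
              intro k; congr 1; omega
            rw [Finset.sum_congr rfl (fun k _ => this k)]
            rw [geom_sum_eq (by norm_num : (1/3:ℝ) ≠ 1)]
            rw [div_le_iff_of_neg (by norm_num : (1/3:ℝ) - 1 < 0)]
            have : (0:ℝ) ≤ (1/3:ℝ)^((kp+kq)*t + 1 - r) := by positivity
            linarith
        _ = (3/2) * ((φ*t)^r / (Nat.factorial r)) := by ring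
    exact le_trans (Finset.sum_le_sum step1) step2
  -- LOWER BOUND: π xt ≥ (2/3) * ((3/4) φ x t)^r / r!
  have hAr : 4 * r ≤ (kp*xt) := le_trans hxtr (Nat.le_mul_of_pos_left xt (by omega))
  have hBr : 4 * r ≤ (kq*xt) := le_trans hxtr (Nat.le_mul_of_pos_left xt (by omega))
  have hlow : (2/3 : ℝ) * (((3/4)*(φ*x*t))^r / (Nat.factorial r)) ≤ π xt := by
    rw [hπ xt]
    have hmem : r ∈ Finset.Icc r ((kp+kq)*xt) := by
      rw [Finset.mem_Icc]
      refine ⟨le_rfl, ?_⟩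
      calc r ≤ 4*r := by omega
        _ ≤ xt := hxtr
        _ ≤ (kp+kq)*xt := Nat.le_mul_of_pos_left xt (by omega)
    have hnn : ∀ j ∈ Finset.Icc r ((kp+kq)*xt), (0:ℝ) ≤
        ∑ i ∈ Finset.range (j + 1),
          (((kp*xt)).choose i : ℝ) * p ^ i * (1 - p) ^ ((kp*xt) - i) *
          (((kq*xt)).choose (j - i) : ℝ) * q ^ (j - i) * (1 - q) ^ ((kq*xt) - (j - i)) := by
      intro j _
      apply Finset.sum_nonneg
      intro i _
      have := hp0.le
      have := hq0.le
      positivity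
    refine le_trans ?_ (Finset.single_le_sum hnn hmem)
    -- show (2/3)*((3/4 φ x t)^r / r!) ≤ inner sum at r
    have hterm : ∀ i ∈ Finset.range (r+1),
        (2/3 : ℝ) * (((3/4)*((kp*xt):ℝ)*p) ^ i / (Nat.factorial i) *
          (((3/4)*((kq*xt):ℝ)*q) ^ (r-i) / (Nat.factorial (r-i))))
        ≤ (((kp*xt)).choose i : ℝ) * p ^ i * (1 - p) ^ ((kp*xt) - i) *
          (((kq*xt)).choose (r - i) : ℝ) * q ^ (r - i) * (1 - q) ^ ((kq*xt) - (r - i)) := by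
      intro i hi
      have hir : i ≤ r := Nat.lt_succ_iff.mp (Finset.mem_range.mp hi)
      have hjr : r - i ≤ r := Nat.sub_le r i
      have c1 : ((3/4:ℝ)*((kp*xt):ℝ))^i / (Nat.factorial i) ≤ (((kp*xt)).choose i : ℝ) := by
        rw [div_le_iff₀ (by positivity)]
        have := choose_lower_s13 (kp*xt) i r hir hAr; push_cast at this ⊢; exact this
      have c2 : ((3/4:ℝ)*((kq*xt):ℝ))^(r-i) / (Nat.factorial (r-i)) ≤ (((kq*xt)).choose (r-i) : ℝ) := by
        rw [div_le_iff₀ (by positivity)]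
        have := choose_lower_s13 (kq*xt) (r-i) r hjr hBr; push_cast at this ⊢; exact this
      have d1 : (1-p)^(kp*xt) ≤ (1-p)^((kp*xt)-i) := pow_le_pow_of_le_one h1p0 h1p1 (Nat.sub_le (kp*xt) i)
      have d2 : (1-q)^(kq*xt) ≤ (1-q)^((kq*xt)-(r-i)) := pow_le_pow_of_le_one h1q0 h1q1 (Nat.sub_le (kq*xt) (r-i))
      have hc1nn : (0:ℝ) ≤ ((3/4:ℝ)*((kp*xt):ℝ))^i / (Nat.factorial i) := by positivity
      have hc2nn : (0:ℝ) ≤ ((3/4:ℝ)*((kq*xt):ℝ))^(r-i) / (Nat.factorial (r-i)) := by positivity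
      calc (2/3 : ℝ) * (((3/4)*((kp*xt):ℝ)*p) ^ i / (Nat.factorial i) *
            (((3/4)*((kq*xt):ℝ)*q) ^ (r-i) / (Nat.factorial (r-i))))
          = (2/3 : ℝ) * ((((3/4:ℝ)*((kp*xt):ℝ))^i / (Nat.factorial i)) * p^i *
              ((((3/4:ℝ)*((kq*xt):ℝ))^(r-i) / (Nat.factorial (r-i))) * q^(r-i))) := by
            rw [mul_pow, mul_pow]; ring
        _ ≤ ((1-p)^(kp*xt) * (1-q)^(kq*xt)) * ((((3/4:ℝ)*((kp*xt):ℝ))^i / (Nat.factorial i)) * p^i *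
              ((((3/4:ℝ)*((kq*xt):ℝ))^(r-i) / (Nat.factorial (r-i))) * q^(r-i))) := by
            apply mul_le_mul_of_nonneg_right hprod
            have := hp0.le; have := hq0.le
            positivity
        _ ≤ ((1-p)^((kp*xt)-i) * (1-q)^((kq*xt)-(r-i))) * ((((kp*xt)).choose i : ℝ) * p^i *
              ((((kq*xt)).choose (r-i) : ℝ) * q^(r-i))) := by
            have := hp0.le; have := hq0.le
            gcongr
        _ = (((kp*xt)).choose i : ℝ) * p ^ i * (1 - p) ^ ((kp*xt) - i) *
            (((kq*xt)).choose (r - i) : ℝ) * q ^ (r - i) * (1 - q) ^ ((kq*xt) - (r - i)) := by ring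
    calc (2/3 : ℝ) * (((3/4)*(φ*x*t))^r / (Nat.factorial r))
        = ∑ i ∈ Finset.range (r+1), (2/3 : ℝ) * (((3/4)*((kp*xt):ℝ)*p) ^ i / (Nat.factorial i) *
            (((3/4)*((kq*xt):ℝ)*q) ^ (r-i) / (Nat.factorial (r-i)))) := by
          rw [← Finset.mul_sum, sum_pow_div_factorial]
          congr 2
          rw [← hAB]; ring
      _ ≤ ∑ i ∈ Finset.range (r + 1),
          (((kp*xt)).choose i : ℝ) * p ^ i * (1 - p) ^ ((kp*xt) - i) *
          (((kq*xt)).choose (r - i) : ℝ) * q ^ (r - i) * (1 - q) ^ ((kq*xt) - (r - i)) :=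
          Finset.sum_le_sum hterm
  -- FINAL assembly
  have h3x : (0:ℝ) < 3*x*(1-p) := by linarith
  set c := 4 / (3*x*(1-p)) with hc
  have hc0 : 0 < c := by positivity
  have hbase : φ*t ≤ c * ((3/4)*(φ*x*t)) := by
    have hcc : c * ((3/4)*(φ*x*t)) = (φ*t) / (1-p) := by
      have hne : (1:ℝ) - p ≠ 0 := by linarith
      rw [hc]; field_simp
    rw [hcc, le_div_iff₀ (by linarith : (0:ℝ) < 1-p)]
    nlinarith
  have hpow : (φ*t)^r ≤ (c * ((3/4)*(φ*x*t)))^r := pow_le_pow_left₀ hφt0 hbase r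
  have hfact0 : (0:ℝ) < Nat.factorial r := by positivity
  calc π t ≤ (3/2) * ((φ*t)^r / (Nat.factorial r)) := hupper
    _ ≤ (8/3) * ((c * ((3/4)*(φ*x*t)))^r / (Nat.factorial r)) := by
        have h1 : (φ*t)^r / (Nat.factorial r) ≤ (c * ((3/4)*(φ*x*t)))^r / (Nat.factorial r) :=
          by gcongr
        have hu0 : (0:ℝ) ≤ (φ*t)^r / (Nat.factorial r) := by positivity
        linarith
    _ = 4 * c^r * ((2/3) * (((3/4)*(φ*x*t))^r / (Nat.factorial r))) := by
        rw [mul_pow]; ring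
    _ ≤ 4 * c^r * π xt := by
        apply mul_le_mul_of_nonneg_left hlow (by positivity)
end

section
/- Let Y be a random variable taking values in positive integers with Pr[Y ≤ t] > 0 for all t ≥ 1, and define ξ(t) = (1[Y ≤ t] - Pr[Y ≤ t]) / Pr[Y ≤ t]. Then ξ is a reverse martingale: E[ξ(t-1) | ξ(t), ξ(t+1), ...] = ξ(t) for all t ≥ 2. -/
open MeasureTheory

theorem indicator_ratio_reverse_martingale
    {Ω : Type*} [m0 : MeasurableSpace Ω] (μ : Measure Ω) [IsProbabilityMeasure μ]
    (Y : Ω → ℕ)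
    (hmeas : ∀ s : ℕ, MeasurableSet {ω | Y ω ≤ s})
    (hpos : ∀ ω, 1 ≤ Y ω)
    (hprob : ∀ t : ℕ, 1 ≤ t → 0 < μ {ω | Y ω ≤ t})
    (𝒢 : ℕ → MeasurableSpace Ω)
    (h𝒢le : ∀ t, 𝒢 t ≤ m0)
    (h𝒢 : ∀ t : ℕ, 𝒢 t =
      MeasurableSpace.generateFrom {A | ∃ s, t ≤ s ∧ A = {ω | Y ω ≤ s}})
    (ξ : ℕ → Ω → ℝ)
    (hξ : ∀ t ω, ξ t ω =
      ((if Y ω ≤ t then (1 : ℝ) else 0) - (μ {ω' | Y ω' ≤ t}).toReal) /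
        (μ {ω' | Y ω' ≤ t}).toReal) :
    ∀ t : ℕ, 2 ≤ t → μ[ξ (t - 1) | 𝒢 t] =ᵐ[μ] ξ t := by
  -- notation
  set p : ℕ → ℝ := fun s => (μ {ω' | Y ω' ≤ s}).toReal with hp
  have hptoReal : ∀ s : ℕ, 1 ≤ s → 0 < p s := by
    intro s hs
    exact ENNReal.toReal_pos (hprob s hs).ne' (measure_lt_top _ _).ne
  -- rewrite ξ as indicator minus 1
  have hξ' : ∀ s : ℕ, 1 ≤ s →
      ξ s = fun ω => Set.indicator {ω' | Y ω' ≤ s} (fun _ => (p s)⁻¹) ω - 1 := by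
    intro s hs
    funext ω
    rw [hξ]
    have hps := hptoReal s hs
    have hq : (μ {ω' | Y ω' ≤ s}).toReal ≠ 0 := hps.ne'
    by_cases h : Y ω ≤ s
    · simp only [h, if_pos, Set.indicator_of_mem, Set.mem_setOf_eq]
      field_simp
      simp only [hp]
      ring
    · simp only [h, if_neg, Set.indicator_of_notMem, Set.mem_setOf_eq, not_false_iff]
      field_simp
      ring
  -- integrability
  have hint : ∀ s : ℕ, 1 ≤ s → Integrable (ξ s) μ := by
    intro s hs
    rw [hξ' s hs]
    exact ((integrable_const ((p s)⁻¹)).indicator (hmeas s)).sub (integrable_const 1)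
  -- set integral over {Y ≤ r} for r ≥ s
  have hsetint : ∀ s r : ℕ, 1 ≤ s → s ≤ r →
      ∫ x in {ω' | Y ω' ≤ r}, ξ s x ∂μ = 1 - p r := by
    intro s r hs hsr
    rw [hξ' s hs]
    rw [integral_sub (((integrable_const ((p s)⁻¹)).indicator (hmeas s)).integrableOn)
      (integrable_const 1).integrableOn]
    rw [setIntegral_indicator (hmeas s)]
    have hsub : {ω' | Y ω' ≤ r} ∩ {ω' | Y ω' ≤ s} = {ω' | Y ω' ≤ s} := by
      ext ω; simp only [Set.mem_inter_iff, Set.mem_setOf_eq]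
      exact ⟨fun h => h.2, fun h => ⟨h.trans hsr, h⟩⟩
    rw [hsub, setIntegral_const, setIntegral_const, smul_eq_mul, smul_eq_mul, mul_one]
    have hps := hptoReal s hs
    show p s * (p s)⁻¹ - p r = 1 - p r
    field_simp
  -- total integral is 0
  have htot : ∀ s : ℕ, 1 ≤ s → ∫ x, ξ s x ∂μ = 0 := by
    intro s hs
    rw [hξ' s hs]
    rw [integral_sub ((integrable_const ((p s)⁻¹)).indicator (hmeas s)) (integrable_const 1)]
    rw [integral_indicator (hmeas s), setIntegral_const, integral_const, smul_eq_mul,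
      smul_eq_mul, Measure.real, Measure.real, measure_univ, ENNReal.toReal_one, one_mul]
    have hps := hptoReal s hs
    show p s * (p s)⁻¹ - 1 = 0
    field_simp
    norm_num
  intro t ht
  have ht1 : 1 ≤ t := le_trans one_le_two ht
  have ht1' : 1 ≤ t - 1 := Nat.le_sub_of_add_le ht
  have htsub : t - 1 ≤ t := Nat.sub_le t 1
  haveI : SigmaFinite (μ.trim (h𝒢le t)) := by
    haveI := isFiniteMeasure_trim (μ := μ) (h𝒢le t)
    infer_instance
  -- π-system
  have hpi : IsPiSystem {A : Set Ω | ∃ s, t ≤ s ∧ A = {ω | Y ω ≤ s}} := by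
    rintro A ⟨s1, hs1, rfl⟩ B ⟨s2, hs2, rfl⟩ -
    exact ⟨min s1 s2, le_min hs1 hs2, by ext ω; simp [le_min_iff]⟩
  -- integrals agree on all 𝒢 t measurable sets
  have hinteq : ∀ A : Set Ω, MeasurableSet[𝒢 t] A →
      ∫ x in A, ξ t x ∂μ = ∫ x in A, ξ (t - 1) x ∂μ := by
    intro A hA
    refine MeasurableSpace.induction_on_inter (m := 𝒢 t)
      (C := fun A _ => ∫ x in A, ξ t x ∂μ = ∫ x in A, ξ (t - 1) x ∂μ)
      (h𝒢 t) hpi (by simp) ?_ ?_ ?_ A hA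
    · rintro B ⟨s, hts, rfl⟩
      rw [hsetint t s ht1 hts, hsetint (t - 1) s ht1' (htsub.trans hts)]
    · intro B hB hBeq
      have hBm : MeasurableSet B := h𝒢le t B hB
      have h1 := integral_add_compl hBm (hint t ht1)
      have h2 := integral_add_compl hBm (hint (t - 1) ht1')
      rw [htot t ht1] at h1
      rw [htot (t - 1) ht1'] at h2
      linarith
    · intro f hdisj hfm hfeq
      have hfm' : ∀ i, MeasurableSet (f i) := fun i => h𝒢le t _ (hfm i)
      rw [integral_iUnion hfm' hdisj ((hint t ht1).integrableOn),
        integral_iUnion hfm' hdisj ((hint (t - 1) ht1').integrableOn)]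
      exact tsum_congr hfeq
  -- ξ t is 𝒢 t strongly measurable
  have hmeasG : AEStronglyMeasurable[𝒢 t] (ξ t) μ := by
    have hAt : MeasurableSet[𝒢 t] {ω | Y ω ≤ t} := by
      rw [h𝒢 t]
      exact MeasurableSpace.measurableSet_generateFrom ⟨t, le_refl t, rfl⟩
    have : StronglyMeasurable[𝒢 t] (ξ t) := by
      rw [hξ' t ht1]
      exact ((stronglyMeasurable_const).indicator hAt).sub stronglyMeasurable_const
    exact this.aestronglyMeasurable
  exact (ae_eq_condExp_of_forall_setIntegral_eq (h𝒢le t) (hint (t - 1) ht1')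
    (fun A _ _ => (hint t ht1).integrableOn)
    (fun A hA _ => hinteq A hA) hmeasG).symm
end

section
/- Let B_i(t) = C(kt, i) p^i (1-p)^{kt - i} viewed as a smooth function of the real variable t > i/k, where k is a positive natural, 0 < p ≤ 1/2, i ≥ 2 a natural, and C(kt, i) = (kt)(kt-1)...(kt-i+1)/i!. If p k t ≤ 1/3 and t > (i-1)/k, then the second derivative B_i''(t) ≥ 0. -/
open Finset

lemma prod_hasDerivAt (k : ℝ) (s : Finset ℕ) (t : ℝ) :
    HasDerivAt (fun x : ℝ => ∏ j ∈ s, (k * x - (j:ℝ)))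
      (∑ j ∈ s, (∏ l ∈ s.erase j, (k * t - (l:ℝ))) * k) t := by
  have h := HasDerivAt.fun_finsetProd (u := s) (f := fun j x => k * x - (j:ℝ))
    (f' := fun _ => k) (x := t)
    (fun j _ => by simpa using ((hasDerivAt_id t).const_mul k).sub_const (j:ℝ))
  simpa [smul_eq_mul] using h

set_option maxHeartbeats 1000000 in
theorem Bi_second_deriv_nonneg (k i : ℕ) (p : ℝ) (hk : 1 ≤ k) (hi : 2 ≤ i)
    (hp0 : 0 < p) (hp : p ≤ 1/2)
    (B : ℝ → ℝ)
    (hB : ∀ t : ℝ, B t =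
      ((∏ j ∈ Finset.range i, ((k : ℝ) * t - j)) / (i.factorial : ℝ)) *
        p ^ i * (1 - p) ^ ((k : ℝ) * t - i))
    (t : ℝ) (ht : ((i : ℝ) - 1) / k < t) (hsmall : p * k * t ≤ 1/3) :
    0 ≤ deriv (deriv B) t := by
  have h1p : 0 < 1 - p := by linarith
  set c : ℝ := Real.log (1 - p) with hc
  set A : ℝ := p ^ i / (i.factorial : ℝ) with hA
  set E : ℝ → ℝ := fun s => Real.exp (c * ((k:ℝ) * s - i)) with hE
  set φ : ℝ → ℝ := fun s => ∏ j ∈ Finset.range i, ((k:ℝ) * s - j) with hφ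
  set φ1 : ℝ → ℝ := fun s =>
      ∑ j ∈ Finset.range i, (∏ l ∈ (Finset.range i).erase j, ((k:ℝ) * s - l)) * k with hφ1
  -- rewrite B
  have hBeq : B = fun s => A * (φ s * E s) := by
    funext s
    rw [hB s, Real.rpow_def_of_pos h1p]
    simp only [hA, hE, hφ]
    ring
  have hEd : ∀ s : ℝ, HasDerivAt E (E s * (c * k)) s := by
    intro s
    have h1 : HasDerivAt (fun x : ℝ => c * ((k:ℝ) * x - i)) (c * k) s := by
      simpa using (((hasDerivAt_id s).const_mul (k:ℝ)).sub_const (i:ℝ)).const_mul c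
    simpa [hE] using h1.exp
  have hBd : ∀ s : ℝ, HasDerivAt B (A * (φ1 s * E s + φ s * (E s * (c * k)))) s := by
    intro s
    rw [hBeq]
    exact ((prod_hasDerivAt (k:ℝ) (Finset.range i) s).mul (hEd s)).const_mul A
  have hderivB : deriv B = fun s => A * (φ1 s * E s + φ s * (E s * (c * k))) :=
    funext fun s => (hBd s).deriv
  -- second derivative
  set φ2 : ℝ := ∑ j ∈ Finset.range i,
      (∑ l ∈ (Finset.range i).erase j,
        (∏ m ∈ ((Finset.range i).erase j).erase l, ((k:ℝ) * t - m)) * k) * k with hφ2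
  have hφ1d : HasDerivAt φ1 φ2 t := by
    apply HasDerivAt.fun_sum
    intro j _
    exact (prod_hasDerivAt (k:ℝ) ((Finset.range i).erase j) t).mul_const (k:ℝ)
  have hB2 : HasDerivAt (deriv B)
      (A * ((φ2 * E t + φ1 t * (E t * (c * k)))
        + (φ1 t * (E t * (c * k)) + φ t * ((E t * (c * k)) * (c * k))))) t := by
    rw [hderivB]
    exact ((hφ1d.mul (hEd t)).add
      ((prod_hasDerivAt (k:ℝ) (Finset.range i) t).mul ((hEd t).mul_const (c * k)))).const_mul A
  rw [hB2.deriv]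
  -- positivity setup
  have hk0 : (0:ℝ) < k := by exact_mod_cast hk
  have hxgt : (i:ℝ) - 1 < (k:ℝ) * t := by
    rw [div_lt_iff₀ hk0] at ht; linarith [ht]
  have hx1 : (1:ℝ) < (k:ℝ) * t := by
    have : (2:ℝ) ≤ i := by exact_mod_cast hi
    linarith
  have hxpos : (0:ℝ) < (k:ℝ) * t := by linarith
  set b : ℕ → ℝ := fun j => ((k:ℝ) * t - j)⁻¹ with hb
  have hpos : ∀ j ∈ Finset.range i, 0 < (k:ℝ) * t - (j:ℝ) := by
    intro j hj
    have h1 : (j:ℝ) ≤ (i:ℝ) - 1 := by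
      have h2 := Finset.mem_range.1 hj
      have h3 : (j:ℝ) + 1 ≤ i := by exact_mod_cast h2
      linarith
    linarith
  have hφpos : 0 < φ t := Finset.prod_pos hpos
  have hbpos : ∀ j ∈ Finset.range i, 0 < b j := fun j hj => inv_pos.2 (hpos j hj)
  have hblow : ∀ j ∈ Finset.range i, ((k:ℝ) * t)⁻¹ ≤ b j := by
    intro j hj
    exact inv_anti₀ (hpos j hj) (by simp [Nat.cast_nonneg])
  -- product over erase
  have herase : ∀ j ∈ Finset.range i,
      (∏ l ∈ (Finset.range i).erase j, ((k:ℝ) * t - (l:ℝ))) = φ t * b j := by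
    intro j hj
    have h := Finset.mul_prod_erase (Finset.range i) (fun l => (k:ℝ) * t - (l:ℝ)) hj
    simp only [hb, hφ]
    rw [eq_mul_inv_iff_mul_eq₀ (hpos j hj).ne', mul_comm]
    exact h
  set S : ℝ := ∑ j ∈ Finset.range i, b j with hS
  have hSnn : 0 ≤ S := Finset.sum_nonneg fun j hj => (hbpos j hj).le
  have hφ1val : φ1 t = (k:ℝ) * φ t * S := by
    simp only [hφ1]
    rw [Finset.sum_congr rfl (fun j hj => by rw [herase j hj]),
      ← Finset.sum_mul, ← Finset.mul_sum, hS]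
    ring
  have herase2 : ∀ j ∈ Finset.range i, ∀ l ∈ (Finset.range i).erase j,
      (∏ m ∈ ((Finset.range i).erase j).erase l, ((k:ℝ) * t - (m:ℝ))) = φ t * b j * b l := by
    intro j hj l hl
    have h := Finset.mul_prod_erase ((Finset.range i).erase j) (fun m => (k:ℝ) * t - (m:ℝ)) hl
    rw [herase j hj] at h
    have hl' : l ∈ Finset.range i := Finset.mem_of_mem_erase hl
    simp only [hb]
    rw [eq_mul_inv_iff_mul_eq₀ (hpos l hl').ne', mul_comm]
    simp only [hb] at h
    exact h
  have hsum_erase : ∀ j ∈ Finset.range i,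
      ∑ l ∈ (Finset.range i).erase j, b l = S - b j := by
    intro j hj
    have h := Finset.add_sum_erase (Finset.range i) b hj
    rw [← hS] at h
    linarith [h]
  set T : ℝ := ∑ j ∈ Finset.range i, b j * (S - b j) with hT
  have hinner : ∀ j ∈ Finset.range i,
      (∑ l ∈ (Finset.range i).erase j,
        (∏ m ∈ ((Finset.range i).erase j).erase l, ((k:ℝ) * t - (m:ℝ))) * k)
      = φ t * b j * (S - b j) * k := by
    intro j hj
    rw [Finset.sum_congr rfl (fun l hl => by rw [herase2 j hj l hl]),
      ← Finset.sum_mul, ← Finset.mul_sum, hsum_erase j hj]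
  have hφ2val : φ2 = (k:ℝ) * (k:ℝ) * φ t * T := by
    rw [hφ2, Finset.sum_congr rfl (fun j hj => by rw [hinner j hj]), hT, Finset.mul_sum]
    exact Finset.sum_congr rfl fun j _ => by ring
  -- inequality on T + 2 c S + c^2
  have hbS : ∀ j ∈ Finset.range i, b j ≤ S :=
    fun j hj => Finset.single_le_sum (fun l hl => (hbpos l hl).le) hj
  set a : ℝ := ((k:ℝ) * t)⁻¹ with ha
  have hapos : 0 < a := inv_pos.2 hxpos
  have hTlow : a * ((i:ℝ) - 1) * S ≤ T := by
    have h1 : ∑ j ∈ Finset.range i, a * (S - b j) ≤ T :=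
      Finset.sum_le_sum fun j hj =>
        mul_le_mul_of_nonneg_right (hblow j hj) (by linarith [hbS j hj])
    have h2 : ∑ j ∈ Finset.range i, a * (S - b j) = a * ((i:ℝ) * S - S) := by
      rw [← Finset.mul_sum, Finset.sum_sub_distrib, Finset.sum_const, Finset.card_range, ← hS]
      simp
    rw [h2] at h1
    nlinarith [h1]
  -- bound on c
  have hax : ((k:ℝ) * t) * a = 1 := mul_inv_cancel₀ hxpos.ne'
  have hple : p ≤ a / 3 := by
    have h1 : (p * (k:ℝ) * t) * a ≤ (1/3) * a := mul_le_mul_of_nonneg_right hsmall hapos.le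
    have h2 : (p * (k:ℝ) * t) * a = p * (((k:ℝ) * t) * a) := by ring
    rw [h2, hax, mul_one] at h1
    linarith
  have ha1 : a ≤ 1 := by
    rw [ha]
    exact inv_le_one_of_one_le₀ hx1.le
  have hp13 : p ≤ 1 / 3 := by linarith
  have hclow : -(a / 2) ≤ c := by
    have h1 : Real.log (1 - p)⁻¹ ≤ (1 - p)⁻¹ - 1 :=
      Real.log_le_sub_one_of_pos (inv_pos.2 h1p)
    rw [Real.log_inv] at h1
    set u : ℝ := (1 - p)⁻¹ with hu0
    have hu : u * (1 - p) = 1 := inv_mul_cancel₀ h1p.ne'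
    have hupos : 0 < u := inv_pos.2 h1p
    have hu' : u - u * p = 1 := by linear_combination hu
    have hu32 : u ≤ 3/2 := by
      nlinarith [mul_nonneg hupos.le (by linarith : (0:ℝ) ≤ 1/3 - p)]
    have hup : u * p ≤ (3/2) * (a/3) := by
      have := mul_le_mul_of_nonneg_right hu32 hp0.le
      nlinarith
    have h2 : (1 - p)⁻¹ - 1 ≤ a / 2 := by
      rw [← hu0]
      linarith
    simp only [hc]
    linarith
  have hkey : 0 ≤ T + 2 * c * S + c ^ 2 := by
    have hi2 : (2:ℝ) ≤ i := by exact_mod_cast hi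
    nlinarith [mul_nonneg (mul_nonneg hapos.le (by linarith : (0:ℝ) ≤ (i:ℝ) - 2)) hSnn,
      mul_nonneg (by linarith : (0:ℝ) ≤ c + a / 2) hSnn, sq_nonneg c]
  -- final assembly
  have hApos : 0 < A := by
    rw [hA]
    apply div_pos (pow_pos hp0 i)
    exact_mod_cast Nat.factorial_pos i
  have hEpos : 0 < E t := Real.exp_pos _
  rw [hφ1val, hφ2val]
  have hfin : A * (((k:ℝ) * (k:ℝ) * φ t * T * E t + (k:ℝ) * φ t * S * (E t * (c * k)))
      + ((k:ℝ) * φ t * S * (E t * (c * k)) + φ t * ((E t * (c * k)) * (c * k))))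
      = (A * E t * ((k:ℝ) * (k:ℝ)) * φ t) * (T + 2 * c * S + c ^ 2) := by ring
  rw [hfin]
  apply mul_nonneg _ hkey
  positivity
end

section
/- For real numbers c₁ ≤ 0, kt > i-1 ≥ 1 (i ≥ 2 integer), if 2c₁ + 1/(kt - j') ≥ 0 for all 0 ≤ j' ≤ i-1, then (c₁ + Σ_{j=0}^{i-1} 1/(kt-j))² ≥ Σ_{j=0}^{i-1} 1/(kt-j)². -/
open Finset

theorem square_sum_ge (c₁ T : ℝ) (i : ℕ) (hc : c₁ ≤ 0) (hi : 2 ≤ i)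
    (hT : (i : ℝ) - 1 < T)
    (h : ∀ j' : ℕ, j' ≤ i - 1 → 0 ≤ 2 * c₁ + 1 / (T - j')) :
    (c₁ + ∑ j ∈ Finset.range i, 1 / (T - j)) ^ 2 ≥
      ∑ j ∈ Finset.range i, 1 / (T - j) ^ 2 := by
  have hi1 : 1 ≤ i := by omega
  have hpos : ∀ j ∈ Finset.range i, 0 < T - (j : ℝ) := by
    intro j hj
    have hj' : j ≤ i - 1 := Nat.le_sub_one_of_lt (Finset.mem_range.mp hj)
    have : (j : ℝ) ≤ (i : ℝ) - 1 := by
      have : ((j : ℕ) : ℝ) ≤ ((i - 1 : ℕ) : ℝ) := by exact_mod_cast hj'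
      have hcast : ((i - 1 : ℕ) : ℝ) = (i : ℝ) - 1 := by
        push_cast [Nat.cast_sub hi1]; ring
      linarith [hcast ▸ this]
    linarith
  set s : ℕ → ℝ := fun j => 1 / (T - j) with hs
  have hspos : ∀ j ∈ Finset.range i, 0 < s j := by
    intro j hj
    exact one_div_pos.mpr (hpos j hj)
  set S := ∑ j ∈ Finset.range i, s j with hS
  have key : ∀ j ∈ Finset.range i, 0 ≤ 2 * c₁ + (S - s j) := by
    intro j hj
    obtain ⟨j₀, hj₀mem, hj₀ne⟩ : ∃ j₀ ∈ Finset.range i, j₀ ≠ j := by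
      by_cases h0 : j = 0
      · exact ⟨1, Finset.mem_range.mpr (by omega), by omega⟩
      · exact ⟨0, Finset.mem_range.mpr (by omega), by omega⟩
    have h1 : s j₀ ≤ S - s j := by
      have he : ∑ j' ∈ (Finset.range i).erase j, s j' = S - s j :=
        Finset.sum_erase_eq_sub hj
      rw [← he]
      exact Finset.single_le_sum
        (fun k hk => (hspos k (Finset.mem_of_mem_erase hk)).le)
        (Finset.mem_erase.mpr ⟨hj₀ne, hj₀mem⟩)
    have h2 : 0 ≤ 2 * c₁ + s j₀ :=
      h j₀ (Nat.le_sub_one_of_lt (Finset.mem_range.mp hj₀mem))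
    linarith
  have hsq : ∑ j ∈ Finset.range i, 1 / (T - (j : ℝ)) ^ 2
      = ∑ j ∈ Finset.range i, (s j) ^ 2 := by
    refine Finset.sum_congr rfl fun j hj => ?_
    simp [hs, one_div, inv_pow]
  have expand : (c₁ + S) ^ 2 - ∑ j ∈ Finset.range i, (s j) ^ 2
      = c₁ ^ 2 + ∑ j ∈ Finset.range i, s j * (2 * c₁ + (S - s j)) := by
    have h1 : ∑ j ∈ Finset.range i, s j * (2 * c₁ + (S - s j))
        = ∑ j ∈ Finset.range i, (s j * (2 * c₁) + s j * S - s j ^ 2) := by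
      refine Finset.sum_congr rfl fun j hj => ?_; ring
    rw [h1, Finset.sum_sub_distrib, Finset.sum_add_distrib, ← Finset.sum_mul,
      ← Finset.sum_mul, ← hS]
    ring
  have hnn : 0 ≤ ∑ j ∈ Finset.range i, s j * (2 * c₁ + (S - s j)) :=
    Finset.sum_nonneg fun j hj => mul_nonneg (hspos j hj).le (key j hj)
  have hc2 : 0 ≤ c₁ ^ 2 := sq_nonneg c₁
  rw [hsq]
  have : (c₁ + S) = c₁ + ∑ j ∈ Finset.range i, 1 / (T - j) := rfl
  linarith [expand]
end
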